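/- arXiv:2307.15102 — 3 statements merged into one kernel-verified Lean document; each statement's English description precedes it below -/
import Mathlib

section
/- Let −∞ ≤ a < b ≤ ∞ and let I be one of the intervals (a,b), (a,b], [a,b), [a,b]. Let λ₁, λ₂ : I → ℂ be continuous and let A(t) be the diagonal matrix with entries λ₁(t), λ₂(t). Suppose that κ₁₃(t) := max{ ∫_t^b e^{−∫_t^s Re λ₁(τ) dτ} ds, ∫_a^t e^{∫_s^t Re λ₂(τ) dτ} ds } exists for all t ∈ I, that K₁₃ := sup_{t∈I} κ₁₃(t) < ∞, and that lim_{t→b⁻} ∫_{t₀}^t Re λ₁(s) ds = ∞ and lim_{t→a⁺} ∫_{t₀}^t Re λ₂(s) ds = ∞ for t₀ ∈ (a,b). Then the system x' = A(t)x is Ulam stable on I (with respect to the maximum norm on ℂ²), and every Ulam constant K for x' = A(t)x on I satisfies K ≥ K₁₃. -/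
open MeasureTheory Filter Set Topology

set_option linter.unusedSectionVars false
noncomputable section

/-- Ulam stability on `I` with constant `K` for the system `x' = A(t) x` on `ℂ²`,
with respect to the maximum norm (the sup norm on `Fin 2 → ℂ`). -/
def UlamStable2C (I : Set ℝ) (A : ℝ → Matrix (Fin 2) (Fin 2) ℂ) (K : ℝ) : Prop :=
  0 < K ∧
  ∀ ε : ℝ, 0 < ε →
    ∀ φ φd : ℝ → Fin 2 → ℂ,
      (∀ t ∈ I, HasDerivWithinAt φ (φd t) I t) →
      ContinuousOn φd I →
      (∀ t ∈ I, ‖φd t - (A t).mulVec (φ t)‖ ≤ ε) →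
      ∃ x : ℝ → Fin 2 → ℂ,
        (∀ t ∈ I, HasDerivWithinAt x ((A t).mulVec (x t)) I t) ∧
        ∀ t ∈ I, ‖φ t - x t‖ ≤ K * ε

/-- `κ₁₃(t)`. -/
def kappa13 (a b : EReal) (l1 l2 : ℝ → ℂ) (t : ℝ) : ℝ :=
  max (∫ s in {s : ℝ | t < s ∧ (s : EReal) < b}, Real.exp (-∫ τ in t..s, (l1 τ).re))
    (∫ s in {s : ℝ | a < (s : EReal) ∧ s < t}, Real.exp (∫ τ in s..t, (l2 τ).re))

section Helpers

variable {a b : EReal} {I : Set ℝ}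
variable {E : Type*} [NormedAddCommGroup E] [NormedSpace ℝ E] [CompleteSpace E]

lemma uIcc_subset_I (hI1 : ∀ x : ℝ, a < (x : EReal) → (x : EReal) < b → x ∈ I)
    (hI2 : ∀ x ∈ I, a ≤ (x : EReal) ∧ (x : EReal) ≤ b)
    {x y : ℝ} (hx : x ∈ I) (hy : y ∈ I) : uIcc x y ⊆ I := by
  intro z hz
  rcases eq_or_ne z x with rfl | hzx
  · exact hx
  rcases eq_or_ne z y with rfl | hzy
  · exact hy
  have hm : min x y ∈ I := by rcases min_choice x y with h | h <;> rw [h] <;> assumption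
  have hM : max x y ∈ I := by rcases max_choice x y with h | h <;> rw [h] <;> assumption
  have h1 : min x y ≤ z ∧ z ≤ max x y := by
    rcases mem_uIcc.mp hz with ⟨u, v⟩ | ⟨u, v⟩
    · exact ⟨le_trans (min_le_left _ _) u, le_trans v (le_max_right _ _)⟩
    · exact ⟨le_trans (min_le_right _ _) u, le_trans v (le_max_left _ _)⟩
  have h1' : min x y < z := by
    refine lt_of_le_of_ne h1.1 ?_
    rcases min_choice x y with h | h <;> rw [h] <;> [exact fun e => hzx e.symm; exact fun e => hzy e.symm]
  have h2' : z < max x y := by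
    refine lt_of_le_of_ne h1.2 ?_
    rcases max_choice x y with h | h <;> rw [h] <;> [exact hzx; exact hzy]
  exact hI1 z (lt_of_le_of_lt (hI2 _ hm).1 (EReal.coe_lt_coe_iff.mpr h1'))
    (lt_of_lt_of_le (EReal.coe_lt_coe_iff.mpr h2') (hI2 _ hM).2)

lemma J_open : IsOpen {x : ℝ | a < (x : EReal) ∧ (x : EReal) < b} := by
  have : {x : ℝ | a < (x : EReal) ∧ (x : EReal) < b}
      = ((↑) : ℝ → EReal) ⁻¹' (Ioo a b) := rfl
  rw [this]
  exact isOpen_Ioo.preimage continuous_coe_real_ereal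

lemma ftc_within (hI1 : ∀ x : ℝ, a < (x : EReal) → (x : EReal) < b → x ∈ I)
    (hI2 : ∀ x ∈ I, a ≤ (x : EReal) ∧ (x : EReal) ≤ b)
    {g : ℝ → E} (hg : ContinuousOn g I) {t₀ t : ℝ} (ht₀ : t₀ ∈ I) (ht : t ∈ I) :
    HasDerivWithinAt (fun u => ∫ τ in t₀..u, g τ) (g t) I t := by
  have hint : IntervalIntegrable g volume t₀ t :=
    (hg.mono (uIcc_subset_I hI1 hI2 ht₀ ht)).intervalIntegrable
  have left : HasDerivWithinAt (fun u => ∫ τ in t₀..u, g τ) (g t) (I ∩ Iic t) t := by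
    rcases lt_or_ge a (t : EReal) with hat | hta
    · obtain ⟨t₁, ht₁a, ht₁t⟩ := EReal.exists_between_coe_real hat
      have ht₁t' : t₁ < t := by exact_mod_cast ht₁t
      have hIoc : Ioc t₁ t ⊆ I := by
        intro s hs
        rcases eq_or_lt_of_le hs.2 with rfl | hst
        · exact ht
        · exact hI1 s (ht₁a.trans (EReal.coe_lt_coe_iff.mpr hs.1))
            (lt_of_lt_of_le (EReal.coe_lt_coe_iff.mpr hst) (hI2 _ ht).2)
      have hmem : Ioc t₁ t ∈ 𝓝[≤] t := Ioc_mem_nhdsLE_of_mem ⟨ht₁t', le_rfl⟩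
      have h1 : StronglyMeasurableAtFilter g (𝓝[≤] t) volume :=
        ⟨Ioc t₁ t, hmem, ((hg.mono hIoc).aestronglyMeasurable measurableSet_Ioc)⟩
      have h2 : ContinuousWithinAt g (Iic t) t := by
        refine (hg t ht).mono_left ?_
        rw [← nhdsWithin_Ioc_eq_nhdsLE ht₁t']
        exact nhdsWithin_mono t hIoc
      exact (intervalIntegral.integral_hasDerivWithinAt_right (s := Iic t) (t := Iic t)
        hint h1 h2).mono inter_subset_right
    · have hsub' : I ∩ Iic t ⊆ {t} := by
        intro s hs
        have h1 := (hI2 s hs.1).1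
        have h2 : (s : EReal) ≤ (t : EReal) := EReal.coe_le_coe_iff.mpr hs.2
        have : (s : EReal) = (t : EReal) := le_antisymm h2 (le_trans hta h1)
        exact EReal.coe_eq_coe_iff.mp this
      have h0 : HasDerivWithinAt (fun u => ∫ τ in t₀..u, g τ) (g t) {t} t := by
        apply HasFDerivWithinAt.of_not_accPt
        rw [accPt_iff_clusterPt, inf_principal]
        simp [ClusterPt]
      exact h0.mono hsub'
  have right : HasDerivWithinAt (fun u => ∫ τ in t₀..u, g τ) (g t) (I ∩ Ici t) t := by
    rcases lt_or_ge (t : EReal) b with htb | hbt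
    · obtain ⟨t₂, htt₂, ht₂b⟩ := EReal.exists_between_coe_real htb
      have htt₂' : t < t₂ := by exact_mod_cast htt₂
      have hIco : Ico t t₂ ⊆ I := by
        intro s hs
        rcases eq_or_lt_of_le hs.1 with rfl | hst
        · exact ht
        · exact hI1 s (lt_of_le_of_lt (hI2 _ ht).1 (EReal.coe_lt_coe_iff.mpr hst))
            ((EReal.coe_lt_coe_iff.mpr hs.2).trans ht₂b)
      have hmem : Ioo t t₂ ∈ 𝓝[>] t := Ioo_mem_nhdsGT_of_mem ⟨le_rfl, htt₂'⟩
      have h1 : StronglyMeasurableAtFilter g (𝓝[>] t) volume :=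
        ⟨Ioo t t₂, hmem, ((hg.mono (fun s hs => hIco ⟨hs.1.le, hs.2⟩)).aestronglyMeasurable
          measurableSet_Ioo)⟩
      have h2 : ContinuousWithinAt g (Ioi t) t := by
        refine (hg t ht).mono_left ?_
        rw [← nhdsWithin_Ioo_eq_nhdsGT htt₂']
        exact nhdsWithin_mono t (fun s hs => hIco ⟨hs.1.le, hs.2⟩)
      exact (intervalIntegral.integral_hasDerivWithinAt_right (s := Ici t) (t := Ioi t)
        hint h1 h2).mono inter_subset_right
    · have hsub' : I ∩ Ici t ⊆ {t} := by
        intro s hs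
        have h2 : (t : EReal) ≤ (s : EReal) := EReal.coe_le_coe_iff.mpr hs.2
        have : (s : EReal) = (t : EReal) := le_antisymm (le_trans (hI2 s hs.1).2 hbt) h2
        exact EReal.coe_eq_coe_iff.mp this
      have h0 : HasDerivWithinAt (fun u => ∫ τ in t₀..u, g τ) (g t) {t} t := by
        apply HasFDerivWithinAt.of_not_accPt
        rw [accPt_iff_clusterPt, inf_principal]
        simp [ClusterPt]
      exact h0.mono hsub'
  have := left.union right
  rw [← inter_union_distrib_left, Iic_union_Ici, inter_univ] at this
  exact this

lemma ftc2_within_le (hI1 : ∀ x : ℝ, a < (x : EReal) → (x : EReal) < b → x ∈ I)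
    (hI2 : ∀ x ∈ I, a ≤ (x : EReal) ∧ (x : EReal) ≤ b)
    {f f' : ℝ → E} (hd : ∀ t ∈ I, HasDerivWithinAt f (f' t) I t)
    (hc : ContinuousOn f' I) {t₀ t : ℝ} (ht₀ : t₀ ∈ I) (ht : t ∈ I) (hle : t₀ ≤ t) :
    ∫ τ in t₀..t, f' τ = f t - f t₀ := by
  have hIcc : Icc t₀ t ⊆ I := by
    have := uIcc_subset_I hI1 hI2 ht₀ ht
    rwa [uIcc_of_le hle] at this
  refine intervalIntegral.integral_eq_sub_of_hasDeriv_right_of_le hle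
    (fun s hs => ((hd s (hIcc hs)).continuousWithinAt).mono hIcc) ?_
    ((hc.mono (uIcc_subset_I hI1 hI2 ht₀ ht)).intervalIntegrable)
  intro x hx
  have hxI : x ∈ I := hIcc ⟨hx.1.le, hx.2.le⟩
  have hxJ : x ∈ {y : ℝ | a < (y : EReal) ∧ (y : EReal) < b} :=
    ⟨lt_of_le_of_lt (hI2 _ ht₀).1 (EReal.coe_lt_coe_iff.mpr hx.1),
     lt_of_lt_of_le (EReal.coe_lt_coe_iff.mpr hx.2) (hI2 _ ht).2⟩
  exact ((hd x hxI).hasDerivAt (mem_nhds_iff.2 ⟨_, fun y hy => hI1 y hy.1 hy.2, J_open, hxJ⟩)).hasDerivWithinAt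

lemma ftc2_within (hI1 : ∀ x : ℝ, a < (x : EReal) → (x : EReal) < b → x ∈ I)
    (hI2 : ∀ x ∈ I, a ≤ (x : EReal) ∧ (x : EReal) ≤ b)
    {f f' : ℝ → E} (hd : ∀ t ∈ I, HasDerivWithinAt f (f' t) I t)
    (hc : ContinuousOn f' I) {t₀ t : ℝ} (ht₀ : t₀ ∈ I) (ht : t ∈ I) :
    ∫ τ in t₀..t, f' τ = f t - f t₀ := by
  rcases le_total t₀ t with hle | hle
  · exact ftc2_within_le hI1 hI2 hd hc ht₀ ht hle
  · rw [intervalIntegral.integral_symm, ftc2_within_le hI1 hI2 hd hc ht ht₀ hle]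
    abel

lemma decomp_gt {f : ℝ → E} {t₁ t₂ : ℝ} (h12 : t₁ ≤ t₂) (ht₂b : (t₂ : EReal) ≤ b)
    (hf : IntegrableOn f {s : ℝ | t₁ < s ∧ (s : EReal) < b}) :
    ∫ s in {s : ℝ | t₁ < s ∧ (s : EReal) < b}, f s
      = (∫ s in t₁..t₂, f s) + ∫ s in {s : ℝ | t₂ < s ∧ (s : EReal) < b}, f s := by
  have hsub2 : {s : ℝ | t₂ < s ∧ (s : EReal) < b} ⊆ {s : ℝ | t₁ < s ∧ (s : EReal) < b} :=
    fun s hs => ⟨lt_of_le_of_lt h12 hs.1, hs.2⟩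
  have hmeas2 : MeasurableSet {s : ℝ | t₂ < s ∧ (s : EReal) < b} := by
    have : {s : ℝ | t₂ < s ∧ (s : EReal) < b}
        = Ioi t₂ ∩ ((↑) : ℝ → EReal) ⁻¹' (Iio b) := rfl
    rw [this]
    exact measurableSet_Ioi.inter (isOpen_Iio.preimage continuous_coe_real_ereal).measurableSet
  have hIoo : Ioo t₁ t₂ ⊆ {s : ℝ | t₁ < s ∧ (s : EReal) < b} :=
    fun s hs => ⟨hs.1, lt_of_lt_of_le (EReal.coe_lt_coe_iff.mpr hs.2) ht₂b⟩
  have hintIoc : IntegrableOn f (Ioc t₁ t₂) :=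
    ((hf.mono_set hIoo).congr_set_ae Ioo_ae_eq_Ioc.symm)
  have haeeq : {s : ℝ | t₁ < s ∧ (s : EReal) < b}
      =ᵐ[volume] (Ioc t₁ t₂ ∪ {s : ℝ | t₂ < s ∧ (s : EReal) < b} : Set ℝ) := by
    rw [MeasureTheory.ae_eq_set]
    constructor
    · refine measure_mono_null (t := (∅ : Set ℝ)) (fun s hs => (hs.2 ?_).elim) (by simp)
      rcases le_or_gt s t₂ with h | h
      · exact Or.inl ⟨hs.1.1, h⟩
      · exact Or.inr ⟨h, hs.1.2⟩
    · refine measure_mono_null (t := ({t₂} : Set ℝ)) ?_ (measure_singleton t₂)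
      rintro s ⟨hs, hns⟩
      rcases hs with hs | hs
      · rcases eq_or_lt_of_le hs.2 with rfl | hlt
        · rfl
        · exact absurd ⟨hs.1, lt_of_lt_of_le (EReal.coe_lt_coe_iff.mpr hlt) ht₂b⟩ hns
      · exact absurd (hsub2 hs) hns
  rw [setIntegral_congr_set haeeq,
    setIntegral_union (Set.disjoint_left.mpr (fun x hx hx2 => absurd hx.2 (not_le.mpr hx2.1))) hmeas2
      hintIoc (hf.mono_set hsub2),
    intervalIntegral.integral_of_le h12]

lemma decomp_lt {f : ℝ → E} {t₁ t₂ : ℝ} (h12 : t₁ ≤ t₂) (hat₁ : a ≤ (t₁ : EReal))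
    (hf : IntegrableOn f {s : ℝ | a < (s : EReal) ∧ s < t₂}) :
    ∫ s in {s : ℝ | a < (s : EReal) ∧ s < t₂}, f s
      = (∫ s in t₁..t₂, f s) + ∫ s in {s : ℝ | a < (s : EReal) ∧ s < t₁}, f s := by
  have hsub1 : {s : ℝ | a < (s : EReal) ∧ s < t₁} ⊆ {s : ℝ | a < (s : EReal) ∧ s < t₂} :=
    fun s hs => ⟨hs.1, lt_of_lt_of_le hs.2 h12⟩
  have hmeas1 : MeasurableSet {s : ℝ | a < (s : EReal) ∧ s < t₁} := by
    have : {s : ℝ | a < (s : EReal) ∧ s < t₁}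
        = ((↑) : ℝ → EReal) ⁻¹' (Ioi a) ∩ Iio t₁ := rfl
    rw [this]
    exact ((isOpen_Ioi.preimage continuous_coe_real_ereal).measurableSet).inter measurableSet_Iio
  have hIoo : Ioo t₁ t₂ ⊆ {s : ℝ | a < (s : EReal) ∧ s < t₂} :=
    fun s hs => ⟨lt_of_le_of_lt hat₁ (EReal.coe_lt_coe_iff.mpr hs.1), hs.2⟩
  have hintIoc : IntegrableOn f (Ioc t₁ t₂) :=
    ((hf.mono_set hIoo).congr_set_ae Ioo_ae_eq_Ioc.symm)
  have haeeq : {s : ℝ | a < (s : EReal) ∧ s < t₂}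
      =ᵐ[volume] (Ioc t₁ t₂ ∪ {s : ℝ | a < (s : EReal) ∧ s < t₁} : Set ℝ) := by
    rw [MeasureTheory.ae_eq_set]
    constructor
    · refine measure_mono_null (t := ({t₁} : Set ℝ)) ?_ (measure_singleton t₁)
      rintro s ⟨hs, hns⟩
      rcases lt_trichotomy s t₁ with h | h | h
      · exact absurd (Or.inr ⟨hs.1, h⟩) hns
      · exact h
      · exact absurd (Or.inl ⟨h, hs.2.le⟩) hns
    · refine measure_mono_null (t := ({t₂} : Set ℝ)) ?_ (measure_singleton t₂)
      rintro s ⟨hs, hns⟩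
      rcases hs with hs | hs
      · rcases eq_or_lt_of_le hs.2 with rfl | hlt
        · rfl
        · exact absurd ⟨lt_of_le_of_lt hat₁ (EReal.coe_lt_coe_iff.mpr hs.1), hlt⟩ hns
      · exact absurd (hsub1 hs) hns
  rw [setIntegral_congr_set haeeq,
    setIntegral_union (Set.disjoint_left.mpr (fun x hx hx2 => absurd hx.1.le (not_le.mpr hx2.2))) hmeas1
      hintIoc (hf.mono_set hsub1),
    intervalIntegral.integral_of_le h12]

lemma measJgt (b : EReal) (t : ℝ) : MeasurableSet {s : ℝ | t < s ∧ (s : EReal) < b} := by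
  have : {s : ℝ | t < s ∧ (s : EReal) < b} = Ioi t ∩ ((↑) : ℝ → EReal) ⁻¹' (Iio b) := rfl
  rw [this]
  exact measurableSet_Ioi.inter (isOpen_Iio.preimage continuous_coe_real_ereal).measurableSet

lemma measJlt (a : EReal) (t : ℝ) : MeasurableSet {s : ℝ | a < (s : EReal) ∧ s < t} := by
  have : {s : ℝ | a < (s : EReal) ∧ s < t} = ((↑) : ℝ → EReal) ⁻¹' (Ioi a) ∩ Iio t := rfl
  rw [this]
  exact ((isOpen_Ioi.preimage continuous_coe_real_ereal).measurableSet).inter measurableSet_Iio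

lemma Jgt_subset_I (hI1 : ∀ x : ℝ, a < (x : EReal) → (x : EReal) < b → x ∈ I)
    (hI2 : ∀ x ∈ I, a ≤ (x : EReal) ∧ (x : EReal) ≤ b) {t : ℝ} (ht : t ∈ I) :
    {s : ℝ | t < s ∧ (s : EReal) < b} ⊆ I :=
  fun s hs => hI1 s (lt_of_le_of_lt (hI2 t ht).1 (EReal.coe_lt_coe_iff.mpr hs.1)) hs.2

lemma Jlt_subset_I (hI1 : ∀ x : ℝ, a < (x : EReal) → (x : EReal) < b → x ∈ I)
    (hI2 : ∀ x ∈ I, a ≤ (x : EReal) ∧ (x : EReal) ≤ b) {t : ℝ} (ht : t ∈ I) :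
    {s : ℝ | a < (s : EReal) ∧ s < t} ⊆ I :=
  fun s hs => hI1 s hs.1 (lt_of_lt_of_le (EReal.coe_lt_coe_iff.mpr hs.2) (hI2 t ht).2)

lemma interval_re {f : ℝ → ℂ} {p q : ℝ} (hf : IntervalIntegrable f volume p q) :
    (∫ τ in p..q, f τ).re = ∫ τ in p..q, (f τ).re := by
  have := Complex.reCLM.intervalIntegral_comp_comm hf
  simp only [Complex.reCLM_apply] at this
  exact this.symm

lemma comp1_stab (hI1 : ∀ x : ℝ, a < (x : EReal) → (x : EReal) < b → x ∈ I)
    (hI2 : ∀ x ∈ I, a ≤ (x : EReal) ∧ (x : EReal) ≤ b)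
    {l : ℝ → ℂ} (hl : ContinuousOn l I)
    (hker : ∀ t ∈ I, IntegrableOn (fun s => Real.exp (-∫ τ in t..s, (l τ).re))
      {s : ℝ | t < s ∧ (s : EReal) < b})
    {t₀ : ℝ} (ht₀ : t₀ ∈ I)
    {ε : ℝ} (hε : 0 ≤ ε) {p pd : ℝ → ℂ}
    (hp : ∀ t ∈ I, HasDerivWithinAt p (pd t) I t)
    (hpd : ContinuousOn pd I)
    (hr : ∀ t ∈ I, ‖pd t - l t * p t‖ ≤ ε) :
    ∃ x : ℝ → ℂ, (∀ t ∈ I, HasDerivWithinAt x (l t * x t) I t) ∧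
      ∀ t ∈ I, ‖p t - x t‖ ≤ ε * ∫ s in {s : ℝ | t < s ∧ (s : EReal) < b},
        Real.exp (-∫ τ in t..s, (l τ).re) := by
  set F : ℝ → ℂ := fun t => ∫ τ in t₀..t, l τ with hFdef
  have hF : ∀ t ∈ I, HasDerivWithinAt F (l t) I t := fun t ht => ftc_within hI1 hI2 hl ht₀ ht
  have hFc : ContinuousOn F I := fun t ht => (hF t ht).continuousWithinAt
  set A : ℝ → ℝ := fun t => ∫ τ in t₀..t, (l τ).re with hAdef
  have hre : ∀ t ∈ I, (F t).re = A t := fun t ht =>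
    interval_re ((hl.mono (uIcc_subset_I hI1 hI2 ht₀ ht)).intervalIntegrable)
  have haddadj : ∀ t ∈ I, ∀ s ∈ I, A s - A t = ∫ τ in t..s, (l τ).re := by
    intro t ht s hs
    have h1 : IntervalIntegrable (fun τ => (l τ).re) volume t₀ t :=
      ((Complex.continuous_re.comp_continuousOn hl).mono
        (uIcc_subset_I hI1 hI2 ht₀ ht)).intervalIntegrable
    have h2 : IntervalIntegrable (fun τ => (l τ).re) volume t s :=
      ((Complex.continuous_re.comp_continuousOn hl).mono
        (uIcc_subset_I hI1 hI2 ht hs)).intervalIntegrable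
    have := intervalIntegral.integral_add_adjacent_intervals h1 h2
    simp only [hAdef]
    linarith [this]
  set En : ℝ → ℂ := fun t => Complex.exp (-F t) with hEdef
  have hE : ∀ t ∈ I, HasDerivWithinAt En (-(l t) * En t) I t := by
    intro t ht
    have := (Complex.hasDerivAt_exp (-F t)).scomp_hasDerivWithinAt t ((hF t ht).neg)
    exact this.congr_deriv (by rw [smul_eq_mul])
  have hEnorm : ∀ t ∈ I, ‖En t‖ = Real.exp (-A t) := by
    intro t ht
    rw [hEdef]
    simp only [Complex.norm_exp, Complex.neg_re, hre t ht]
  set u : ℝ → ℂ := fun t => p t * En t with hudef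
  set r : ℝ → ℂ := fun t => pd t - l t * p t with hrdef
  set h : ℝ → ℂ := fun t => r t * En t with hhdef
  have hu : ∀ t ∈ I, HasDerivWithinAt u (h t) I t := by
    intro t ht
    have := (hp t ht).mul (hE t ht)
    refine this.congr_deriv ?_
    simp only [hhdef, hrdef, hudef]
    ring
  have hpc : ContinuousOn p I := fun t ht => (hp t ht).continuousWithinAt
  have hEc : ContinuousOn En I := Complex.continuous_exp.comp_continuousOn hFc.neg
  have hrc : ContinuousOn r I := hpd.sub (hl.mul hpc)
  have hhc : ContinuousOn h I := hrc.mul hEc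
  have hhbound : ∀ t ∈ I, ‖h t‖ ≤ ε * Real.exp (-A t) := by
    intro t ht
    rw [hhdef]
    simp only
    rw [norm_mul, hEnorm t ht]
    exact mul_le_mul_of_nonneg_right (hr t ht) (Real.exp_nonneg _)
  have hint : ∀ t ∈ I, IntegrableOn h {s : ℝ | t < s ∧ (s : EReal) < b} := by
    intro t ht
    have hsubI := Jgt_subset_I hI1 hI2 ht
    have hgint : IntegrableOn (fun s => (ε * Real.exp (-A t)) *
        Real.exp (-∫ τ in t..s, (l τ).re)) {s : ℝ | t < s ∧ (s : EReal) < b} :=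
      (hker t ht).const_mul _
    refine Integrable.mono' hgint
      ((hhc.mono hsubI).aestronglyMeasurable (measJgt b t)) ?_
    refine (ae_restrict_iff' (measJgt b t)).2 (Filter.Eventually.of_forall ?_)
    intro s hs
    have hsI : s ∈ I := hsubI hs
    calc ‖h s‖ ≤ ε * Real.exp (-A s) := hhbound s hsI
      _ = (ε * Real.exp (-A t)) * Real.exp (-∫ τ in t..s, (l τ).re) := by
          rw [← haddadj t ht s hsI, mul_assoc, ← Real.exp_add]
          congr 1
          ring
  set G : ℝ → ℂ := fun t => ∫ s in {s : ℝ | t < s ∧ (s : EReal) < b}, h s with hGdef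
  have hkey : ∀ t ∈ I, G t₀ = (∫ s in t₀..t, h s) + G t := by
    intro t ht
    rcases le_total t₀ t with hle | hle
    · exact decomp_gt hle (hI2 t ht).2 (hint t₀ ht₀)
    · have h2 := decomp_gt hle (hI2 t₀ ht₀).2 (hint t ht)
      show (∫ s in {s : ℝ | t₀ < s ∧ (s : EReal) < b}, h s)
        = _ + ∫ s in {s : ℝ | t < s ∧ (s : EReal) < b}, h s
      rw [h2, intervalIntegral.integral_symm t₀ t]
      abel
  have hftc2 : ∀ t ∈ I, ∫ s in t₀..t, h s = u t - u t₀ :=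
    fun t ht => ftc2_within hI1 hI2 hu hhc ht₀ ht
  refine ⟨fun t => (u t₀ + G t₀) * Complex.exp (F t), ?_, ?_⟩
  · intro t ht
    have := ((Complex.hasDerivAt_exp (F t)).scomp_hasDerivWithinAt t (hF t ht)).const_mul
      (u t₀ + G t₀)
    refine this.congr_deriv ?_
    simp only [smul_eq_mul]
    ring
  · intro t ht
    have h1 : u t - (u t₀ + G t₀) = -G t := by
      have e1 := hftc2 t ht
      have e2 := hkey t ht
      linear_combination -e1 - e2
    have hp' : p t = u t * Complex.exp (F t) := by
      simp only [hudef, hEdef, Complex.exp_neg, mul_assoc,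
        inv_mul_cancel₀ (Complex.exp_ne_zero (F t)), mul_one]
    have hdiff : p t - (u t₀ + G t₀) * Complex.exp (F t) = -G t * Complex.exp (F t) := by
      rw [hp', ← h1]
      ring
    rw [hdiff, norm_mul, norm_neg]
    have hxnorm : ‖Complex.exp (F t)‖ = Real.exp (A t) := by
      simp only [Complex.norm_exp, hre t ht]
    rw [hxnorm]
    have hGbound : ‖G t‖ ≤ ∫ s in {s : ℝ | t < s ∧ (s : EReal) < b},
        ε * Real.exp (-A s) := by
      refine norm_integral_le_of_norm_le ?_ ?_
      · have : IntegrableOn (fun s => (ε * Real.exp (-A t)) *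
            Real.exp (-∫ τ in t..s, (l τ).re)) {s : ℝ | t < s ∧ (s : EReal) < b} :=
          (hker t ht).const_mul _
        refine this.congr_fun ?_ (measJgt b t)
        intro s hs
        have hsI : s ∈ I := Jgt_subset_I hI1 hI2 ht hs
        show ε * Real.exp (-A t) * Real.exp (-∫ τ in t..s, (l τ).re) = ε * Real.exp (-A s)
        rw [← haddadj t ht s hsI, mul_assoc, ← Real.exp_add]
        congr 1
        ring
      · refine (ae_restrict_iff' (measJgt b t)).2 (Filter.Eventually.of_forall ?_)
        intro s hs
        exact hhbound s (Jgt_subset_I hI1 hI2 ht hs)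
    calc ‖G t‖ * Real.exp (A t) ≤ (∫ s in {s : ℝ | t < s ∧ (s : EReal) < b},
          ε * Real.exp (-A s)) * Real.exp (A t) :=
        mul_le_mul_of_nonneg_right hGbound (Real.exp_nonneg _)
      _ = ∫ s in {s : ℝ | t < s ∧ (s : EReal) < b},
            (ε * Real.exp (-A s)) * Real.exp (A t) := by
          rw [← integral_mul_const]
      _ = ε * ∫ s in {s : ℝ | t < s ∧ (s : EReal) < b},
            Real.exp (-∫ τ in t..s, (l τ).re) := by
          rw [← integral_const_mul]
          refine setIntegral_congr_fun (measJgt b t) ?_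
          intro s hs
          have hsI : s ∈ I := Jgt_subset_I hI1 hI2 ht hs
          show ε * Real.exp (-A s) * Real.exp (A t) = ε * Real.exp (-∫ τ in t..s, (l τ).re)
          rw [← haddadj t ht s hsI, mul_assoc, ← Real.exp_add]
          congr 1
          ring

lemma comp2_stab (hI1 : ∀ x : ℝ, a < (x : EReal) → (x : EReal) < b → x ∈ I)
    (hI2 : ∀ x ∈ I, a ≤ (x : EReal) ∧ (x : EReal) ≤ b)
    {l : ℝ → ℂ} (hl : ContinuousOn l I)
    (hker : ∀ t ∈ I, IntegrableOn (fun s => Real.exp (∫ τ in s..t, (l τ).re))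
      {s : ℝ | a < (s : EReal) ∧ s < t})
    {t₀ : ℝ} (ht₀ : t₀ ∈ I)
    {ε : ℝ} (hε : 0 ≤ ε) {p pd : ℝ → ℂ}
    (hp : ∀ t ∈ I, HasDerivWithinAt p (pd t) I t)
    (hpd : ContinuousOn pd I)
    (hr : ∀ t ∈ I, ‖pd t - l t * p t‖ ≤ ε) :
    ∃ x : ℝ → ℂ, (∀ t ∈ I, HasDerivWithinAt x (l t * x t) I t) ∧
      ∀ t ∈ I, ‖p t - x t‖ ≤ ε * ∫ s in {s : ℝ | a < (s : EReal) ∧ s < t},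
        Real.exp (∫ τ in s..t, (l τ).re) := by
  set F : ℝ → ℂ := fun t => ∫ τ in t₀..t, l τ with hFdef
  have hF : ∀ t ∈ I, HasDerivWithinAt F (l t) I t := fun t ht => ftc_within hI1 hI2 hl ht₀ ht
  have hFc : ContinuousOn F I := fun t ht => (hF t ht).continuousWithinAt
  set A : ℝ → ℝ := fun t => ∫ τ in t₀..t, (l τ).re with hAdef
  have hre : ∀ t ∈ I, (F t).re = A t := fun t ht =>
    interval_re ((hl.mono (uIcc_subset_I hI1 hI2 ht₀ ht)).intervalIntegrable)
  have haddadj : ∀ t ∈ I, ∀ s ∈ I, A s - A t = ∫ τ in t..s, (l τ).re := by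
    intro t ht s hs
    have h1 : IntervalIntegrable (fun τ => (l τ).re) volume t₀ t :=
      ((Complex.continuous_re.comp_continuousOn hl).mono
        (uIcc_subset_I hI1 hI2 ht₀ ht)).intervalIntegrable
    have h2 : IntervalIntegrable (fun τ => (l τ).re) volume t s :=
      ((Complex.continuous_re.comp_continuousOn hl).mono
        (uIcc_subset_I hI1 hI2 ht hs)).intervalIntegrable
    have := intervalIntegral.integral_add_adjacent_intervals h1 h2
    simp only [hAdef]
    linarith [this]
  set En : ℝ → ℂ := fun t => Complex.exp (-F t) with hEdef
  have hE : ∀ t ∈ I, HasDerivWithinAt En (-(l t) * En t) I t := by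
    intro t ht
    have := (Complex.hasDerivAt_exp (-F t)).scomp_hasDerivWithinAt t ((hF t ht).neg)
    exact this.congr_deriv (by rw [smul_eq_mul])
  have hEnorm : ∀ t ∈ I, ‖En t‖ = Real.exp (-A t) := by
    intro t ht
    rw [hEdef]
    simp only [Complex.norm_exp, Complex.neg_re, hre t ht]
  set u : ℝ → ℂ := fun t => p t * En t with hudef
  set r : ℝ → ℂ := fun t => pd t - l t * p t with hrdef
  set h : ℝ → ℂ := fun t => r t * En t with hhdef
  have hu : ∀ t ∈ I, HasDerivWithinAt u (h t) I t := by
    intro t ht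
    have := (hp t ht).mul (hE t ht)
    refine this.congr_deriv ?_
    simp only [hhdef, hrdef, hudef]
    ring
  have hpc : ContinuousOn p I := fun t ht => (hp t ht).continuousWithinAt
  have hEc : ContinuousOn En I := Complex.continuous_exp.comp_continuousOn hFc.neg
  have hrc : ContinuousOn r I := hpd.sub (hl.mul hpc)
  have hhc : ContinuousOn h I := hrc.mul hEc
  have hhbound : ∀ t ∈ I, ‖h t‖ ≤ ε * Real.exp (-A t) := by
    intro t ht
    rw [hhdef]
    simp only
    rw [norm_mul, hEnorm t ht]
    exact mul_le_mul_of_nonneg_right (hr t ht) (Real.exp_nonneg _)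
  have hint : ∀ t ∈ I, IntegrableOn h {s : ℝ | a < (s : EReal) ∧ s < t} := by
    intro t ht
    have hsubI := Jlt_subset_I hI1 hI2 ht
    have hgint : IntegrableOn (fun s => (ε * Real.exp (-A t)) *
        Real.exp (∫ τ in s..t, (l τ).re)) {s : ℝ | a < (s : EReal) ∧ s < t} :=
      (hker t ht).const_mul _
    refine Integrable.mono' hgint
      ((hhc.mono hsubI).aestronglyMeasurable (measJlt a t)) ?_
    refine (ae_restrict_iff' (measJlt a t)).2 (Filter.Eventually.of_forall ?_)
    intro s hs
    have hsI : s ∈ I := hsubI hs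
    calc ‖h s‖ ≤ ε * Real.exp (-A s) := hhbound s hsI
      _ = (ε * Real.exp (-A t)) * Real.exp (∫ τ in s..t, (l τ).re) := by
          rw [← haddadj s hsI t ht, mul_assoc, ← Real.exp_add]
          congr 1
          ring
  set G : ℝ → ℂ := fun t => ∫ s in {s : ℝ | a < (s : EReal) ∧ s < t}, h s with hGdef
  have hkey : ∀ t ∈ I, G t = (∫ s in t₀..t, h s) + G t₀ := by
    intro t ht
    rcases le_total t₀ t with hle | hle
    · exact decomp_lt hle (hI2 t₀ ht₀).1 (hint t ht)
    · have h2 := decomp_lt hle (hI2 t ht).1 (hint t₀ ht₀)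
      show (∫ s in {s : ℝ | a < (s : EReal) ∧ s < t}, h s)
        = _ + ∫ s in {s : ℝ | a < (s : EReal) ∧ s < t₀}, h s
      rw [h2, intervalIntegral.integral_symm t₀ t]
      abel
  have hftc2 : ∀ t ∈ I, ∫ s in t₀..t, h s = u t - u t₀ :=
    fun t ht => ftc2_within hI1 hI2 hu hhc ht₀ ht
  refine ⟨fun t => (u t₀ - G t₀) * Complex.exp (F t), ?_, ?_⟩
  · intro t ht
    have := ((Complex.hasDerivAt_exp (F t)).scomp_hasDerivWithinAt t (hF t ht)).const_mul
      (u t₀ - G t₀)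
    refine this.congr_deriv ?_
    simp only [smul_eq_mul]
    ring
  · intro t ht
    have h1 : u t - (u t₀ - G t₀) = G t := by
      have e1 := hftc2 t ht
      have e2 := hkey t ht
      linear_combination -e1 - e2
    have hp' : p t = u t * Complex.exp (F t) := by
      simp only [hudef, hEdef, Complex.exp_neg, mul_assoc,
        inv_mul_cancel₀ (Complex.exp_ne_zero (F t)), mul_one]
    have hdiff : p t - (u t₀ - G t₀) * Complex.exp (F t) = G t * Complex.exp (F t) := by
      rw [hp', ← h1]
      ring
    rw [hdiff, norm_mul]
    have hxnorm : ‖Complex.exp (F t)‖ = Real.exp (A t) := by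
      simp only [Complex.norm_exp, hre t ht]
    rw [hxnorm]
    have hGbound : ‖G t‖ ≤ ∫ s in {s : ℝ | a < (s : EReal) ∧ s < t},
        ε * Real.exp (-A s) := by
      refine norm_integral_le_of_norm_le ?_ ?_
      · have : IntegrableOn (fun s => (ε * Real.exp (-A t)) *
            Real.exp (∫ τ in s..t, (l τ).re)) {s : ℝ | a < (s : EReal) ∧ s < t} :=
          (hker t ht).const_mul _
        refine this.congr_fun ?_ (measJlt a t)
        intro s hs
        have hsI : s ∈ I := Jlt_subset_I hI1 hI2 ht hs
        show ε * Real.exp (-A t) * Real.exp (∫ τ in s..t, (l τ).re) = ε * Real.exp (-A s)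
        rw [← haddadj s hsI t ht, mul_assoc, ← Real.exp_add]
        congr 1
        ring
      · refine (ae_restrict_iff' (measJlt a t)).2 (Filter.Eventually.of_forall ?_)
        intro s hs
        exact hhbound s (Jlt_subset_I hI1 hI2 ht hs)
    calc ‖G t‖ * Real.exp (A t) ≤ (∫ s in {s : ℝ | a < (s : EReal) ∧ s < t},
          ε * Real.exp (-A s)) * Real.exp (A t) :=
        mul_le_mul_of_nonneg_right hGbound (Real.exp_nonneg _)
      _ = ∫ s in {s : ℝ | a < (s : EReal) ∧ s < t},
            (ε * Real.exp (-A s)) * Real.exp (A t) := by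
          rw [← integral_mul_const]
      _ = ε * ∫ s in {s : ℝ | a < (s : EReal) ∧ s < t},
            Real.exp (∫ τ in s..t, (l τ).re) := by
          rw [← integral_const_mul]
          refine setIntegral_congr_fun (measJlt a t) ?_
          intro s hs
          have hsI : s ∈ I := Jlt_subset_I hI1 hI2 ht hs
          show ε * Real.exp (-A s) * Real.exp (A t) = ε * Real.exp (∫ τ in s..t, (l τ).re)
          rw [← haddadj s hsI t ht, mul_assoc, ← Real.exp_add]
          congr 1
          ring

lemma sol_form (hI1 : ∀ x : ℝ, a < (x : EReal) → (x : EReal) < b → x ∈ I)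
    (hI2 : ∀ x ∈ I, a ≤ (x : EReal) ∧ (x : EReal) ≤ b)
    {l : ℝ → ℂ} (hl : ContinuousOn l I) {t₀ : ℝ} (ht₀ : t₀ ∈ I) {x : ℝ → ℂ}
    (hx : ∀ t ∈ I, HasDerivWithinAt x (l t * x t) I t) :
    ∀ t ∈ I, x t = x t₀ * Complex.exp (∫ τ in t₀..t, l τ) := by
  set F : ℝ → ℂ := fun t => ∫ τ in t₀..t, l τ with hFdef
  have hF : ∀ t ∈ I, HasDerivWithinAt F (l t) I t := fun t ht => ftc_within hI1 hI2 hl ht₀ ht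
  set w : ℝ → ℂ := fun t => x t * Complex.exp (-F t) with hwdef
  have hw : ∀ t ∈ I, HasDerivWithinAt w 0 I t := by
    intro t ht
    have hE := (Complex.hasDerivAt_exp (-F t)).scomp_hasDerivWithinAt t ((hF t ht).neg)
    have := (hx t ht).mul hE
    refine this.congr_deriv ?_
    simp only [Function.comp, smul_eq_mul, Pi.neg_apply]
    ring
  have hconv : Convex ℝ I := convex_iff_ordConnected.mpr
    ⟨fun p hp q hq => fun z hz => uIcc_subset_I hI1 hI2 hp hq (Icc_subset_uIcc hz)⟩
  have hconst : ∀ t ∈ I, w t = w t₀ := by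
    intro t ht
    have := hconv.norm_image_sub_le_of_norm_hasDerivWithin_le
      (f := w) (f' := fun _ => 0) (C := 0) (fun s hs => hw s hs) (fun s _ => by simp) ht₀ ht
    have h0 : ‖w t - w t₀‖ ≤ 0 := by simpa using this
    have h1 := le_antisymm h0 (norm_nonneg _)
    rwa [norm_eq_zero, sub_eq_zero] at h1
  intro t ht
  have h1 := hconst t ht
  have h2 : w t₀ = x t₀ := by
    simp [hwdef, hFdef, intervalIntegral.integral_same]
  have h3 : x t = w t * Complex.exp (F t) := by
    simp only [hwdef, Complex.exp_neg, mul_assoc, inv_mul_cancel₀ (Complex.exp_ne_zero (F t)),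
      mul_one]
  rw [h3, h1, h2]

lemma neBot_lb (hab : a < b) :
    (Filter.comap (fun x : ℝ => (x : EReal)) (nhdsWithin b (Iio b))).NeBot := by
  refine Filter.comap_neBot (fun T hT => ?_)
  obtain ⟨U, hU, hsub⟩ := mem_nhdsWithin_iff_exists_mem_nhds_inter.mp hT
  obtain ⟨l', hl'b, hIoc⟩ := exists_Ioc_subset_of_mem_nhds hU ⟨a, hab⟩
  obtain ⟨r, hl'r, hrb⟩ := EReal.exists_between_coe_real hl'b
  exact ⟨r, hsub ⟨hIoc ⟨hl'r, hrb.le⟩, hrb⟩⟩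

lemma neBot_la (hab : a < b) :
    (Filter.comap (fun x : ℝ => (x : EReal)) (nhdsWithin a (Ioi a))).NeBot := by
  refine Filter.comap_neBot (fun T hT => ?_)
  obtain ⟨U, hU, hsub⟩ := mem_nhdsWithin_iff_exists_mem_nhds_inter.mp hT
  obtain ⟨u', hau', hIco⟩ := exists_Ico_subset_of_mem_nhds hU ⟨b, hab⟩
  obtain ⟨r, har, hru'⟩ := EReal.exists_between_coe_real hau'
  exact ⟨r, hsub ⟨hIco ⟨har.le, hru'⟩, har⟩⟩

lemma ev_lb (hab : a < b) (hI1 : ∀ x : ℝ, a < (x : EReal) → (x : EReal) < b → x ∈ I) :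
    ∀ᶠ t in Filter.comap (fun x : ℝ => (x : EReal)) (nhdsWithin b (Iio b)), t ∈ I := by
  have h1 : Ioi a ∩ Iio b ∈ nhdsWithin b (Iio b) :=
    Filter.inter_mem (mem_nhdsWithin_of_mem_nhds (isOpen_Ioi.mem_nhds hab)) self_mem_nhdsWithin
  refine Filter.eventually_of_mem (Filter.preimage_mem_comap h1) ?_
  intro t ht
  exact hI1 t ht.1 ht.2

lemma ev_la (hab : a < b) (hI1 : ∀ x : ℝ, a < (x : EReal) → (x : EReal) < b → x ∈ I) :
    ∀ᶠ t in Filter.comap (fun x : ℝ => (x : EReal)) (nhdsWithin a (Ioi a)), t ∈ I := by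
  have h1 : Iio b ∩ Ioi a ∈ nhdsWithin a (Ioi a) :=
    Filter.inter_mem (mem_nhdsWithin_of_mem_nhds (isOpen_Iio.mem_nhds hab)) self_mem_nhdsWithin
  refine Filter.eventually_of_mem (Filter.preimage_mem_comap h1) ?_
  intro t ht
  exact hI1 t ht.2 ht.1

lemma growth_contra {I : Set ℝ} {K C : ℝ} {A G : ℝ → ℝ} {c : ℂ} (hc : c ≠ 0)
    {lf : Filter ℝ} (hne : lf.NeBot) (hev : ∀ᶠ t in lf, t ∈ I)
    (htend : Filter.Tendsto A lf atTop)
    {t₀ : ℝ} (ht₀ : t₀ ∈ I)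
    (hbound : ∀ s ∈ I, Real.exp (A s) * ‖(G s : ℂ) + c‖ ≤ K)
    (hGpos : ∀ s ∈ I, 0 ≤ G s) (hP : ∀ s ∈ I, Real.exp (A s) * G s ≤ C) : False := by
  have hc0 : 0 < ‖c‖ := norm_pos_iff.mpr hc
  have hub : ∀ s ∈ I, Real.exp (A s) * ‖c‖ ≤ K + C := by
    intro s hs
    have h1 : ‖c‖ ≤ ‖(G s : ℂ) + c‖ + G s := by
      have h2 : ‖c‖ ≤ ‖(G s : ℂ) + c‖ + ‖(G s : ℂ)‖ := by
        have := norm_sub_le ((G s : ℂ) + c) ((G s : ℂ))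
        simpa using this
      rwa [Complex.norm_real, Real.norm_of_nonneg (hGpos s hs)] at h2
    calc Real.exp (A s) * ‖c‖ ≤ Real.exp (A s) * (‖(G s : ℂ) + c‖ + G s) :=
          mul_le_mul_of_nonneg_left h1 (Real.exp_nonneg _)
      _ = Real.exp (A s) * ‖(G s : ℂ) + c‖ + Real.exp (A s) * G s := by ring
      _ ≤ K + C := add_le_add (hbound s hs) (hP s hs)
  set D : ℝ := (K + C) / ‖c‖ with hDdef
  have hKC : 0 < K + C := lt_of_lt_of_le (by positivity) (hub t₀ ht₀)
  have hD : 0 < D := div_pos hKC hc0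
  have hub' : ∀ s ∈ I, Real.exp (A s) ≤ D := by
    intro s hs
    rw [hDdef, le_div_iff₀ hc0]
    exact hub s hs
  obtain ⟨s, hAs, hsI⟩ := ((htend.eventually (eventually_ge_atTop (Real.log D + 1))).and hev).exists
  have e1 : Real.exp (Real.log D + 1) ≤ Real.exp (A s) := Real.exp_le_exp.2 hAs
  rw [Real.exp_add, Real.exp_log hD] at e1
  have e2 : (2 : ℝ) ≤ Real.exp 1 := by nlinarith [Real.add_one_le_exp (1 : ℝ)]
  have e3 := hub' s hsI
  nlinarith

end Helpers

theorem statement8 (a b : EReal) (hab : a < b) (I : Set ℝ)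
    (hI1 : ∀ x : ℝ, a < (x : EReal) → (x : EReal) < b → x ∈ I)
    (hI2 : ∀ x ∈ I, a ≤ (x : EReal) ∧ (x : EReal) ≤ b)
    (l1 l2 : ℝ → ℂ) (hl1 : ContinuousOn l1 I) (hl2 : ContinuousOn l2 I)
    (hker1 : ∀ t ∈ I, IntegrableOn
      (fun s => Real.exp (-∫ τ in t..s, (l1 τ).re)) {s : ℝ | t < s ∧ (s : EReal) < b})
    (hker2 : ∀ t ∈ I, IntegrableOn
      (fun s => Real.exp (∫ τ in s..t, (l2 τ).re)) {s : ℝ | a < (s : EReal) ∧ s < t})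
    (hbdd : BddAbove (kappa13 a b l1 l2 '' I))
    (hlim : ∀ t₀ : ℝ, a < (t₀ : EReal) → (t₀ : EReal) < b →
        (Tendsto (fun t => ∫ s in t₀..t, (l1 s).re)
          (Filter.comap (fun x : ℝ => (x : EReal)) (nhdsWithin b (Iio b))) atTop) ∧
        (Tendsto (fun t => ∫ s in t₀..t, (l2 s).re)
          (Filter.comap (fun x : ℝ => (x : EReal)) (nhdsWithin a (Ioi a))) atTop)) :
    UlamStable2C I (fun t => !![l1 t, 0; 0, l2 t]) (sSup (kappa13 a b l1 l2 '' I)) ∧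
    ∀ K : ℝ, UlamStable2C I (fun t => !![l1 t, 0; 0, l2 t]) K → sSup (kappa13 a b l1 l2 '' I) ≤ K := by
  obtain ⟨t₀, hat₀, ht₀b⟩ := EReal.exists_between_coe_real hab
  have ht₀I : t₀ ∈ I := hI1 t₀ hat₀ ht₀b
  have hrel1 : ContinuousOn (fun τ => (l1 τ).re) I := Complex.continuous_re.comp_continuousOn hl1
  have hrel2 : ContinuousOn (fun τ => (l2 τ).re) I := Complex.continuous_re.comp_continuousOn hl2
  have hkle : ∀ t ∈ I, kappa13 a b l1 l2 t ≤ sSup (kappa13 a b l1 l2 '' I) :=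
    fun t ht => le_csSup hbdd (mem_image_of_mem _ ht)
  -- positivity of the supremum
  have hpos : 0 < kappa13 a b l1 l2 t₀ := by
    obtain ⟨t₁, ht₀t₁, ht₁b⟩ := EReal.exists_between_coe_real ht₀b
    have ht₀t₁' : t₀ < t₁ := by exact_mod_cast ht₀t₁
    have hsub : Ioo t₀ t₁ ⊆ {s : ℝ | t₀ < s ∧ (s : EReal) < b} :=
      fun s hs => ⟨hs.1, (EReal.coe_lt_coe_iff.mpr hs.2).trans ht₁b⟩
    have h0 : 0 < ∫ s in {s : ℝ | t₀ < s ∧ (s : EReal) < b},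
        Real.exp (-∫ τ in t₀..s, (l1 τ).re) := by
      rw [setIntegral_pos_iff_support_of_nonneg_ae
        (Filter.Eventually.of_forall (fun s => Real.exp_nonneg _)) (hker1 t₀ ht₀I)]
      have hsupp : Function.support (fun s => Real.exp (-∫ τ in t₀..s, (l1 τ).re)) = univ := by
        ext s
        simp [Function.mem_support, Real.exp_ne_zero]
      rw [hsupp, univ_inter]
      calc (0 : ENNReal) < volume (Ioo t₀ t₁) := by
            rw [Real.volume_Ioo]
            exact ENNReal.ofReal_pos.mpr (by linarith)
        _ ≤ volume {s : ℝ | t₀ < s ∧ (s : EReal) < b} := measure_mono hsub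
    exact lt_of_lt_of_le h0 (le_max_left _ _)
  have hKs0 : 0 < sSup (kappa13 a b l1 l2 '' I) := lt_of_lt_of_le hpos (hkle t₀ ht₀I)
  -- mulVec computation
  have hmv : ∀ (t : ℝ) (v : Fin 2 → ℂ),
      (!![l1 t, 0; 0, l2 t]).mulVec v = ![l1 t * v 0, l2 t * v 1] := by
    intro t v
    funext i
    fin_cases i <;>
      simp [Matrix.mulVec, dotProduct, Fin.sum_univ_two]
  constructor
  · -- Ulam stability with constant sSup
    refine ⟨hKs0, ?_⟩
    intro ε hε φ φd hφ hφdc hφb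
    have hp1 : ∀ t ∈ I, HasDerivWithinAt (fun u => φ u 0) (φd t 0) I t :=
      fun t ht => hasDerivWithinAt_pi.mp (hφ t ht) 0
    have hp2 : ∀ t ∈ I, HasDerivWithinAt (fun u => φ u 1) (φd t 1) I t :=
      fun t ht => hasDerivWithinAt_pi.mp (hφ t ht) 1
    have hc1 : ContinuousOn (fun u => φd u 0) I := (continuous_apply 0).comp_continuousOn hφdc
    have hc2 : ContinuousOn (fun u => φd u 1) I := (continuous_apply 1).comp_continuousOn hφdc
    have hr1 : ∀ t ∈ I, ‖φd t 0 - l1 t * φ t 0‖ ≤ ε := by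
      intro t ht
      have h1 := norm_le_pi_norm (φd t - (!![l1 t, 0; 0, l2 t]).mulVec (φ t)) 0
      rw [Pi.sub_apply, hmv t (φ t)] at h1
      simp only [Matrix.cons_val_zero] at h1
      have h2 := hφb t ht
      rw [show ((fun t => !![l1 t, 0; 0, l2 t]) t).mulVec (φ t)
        = ![l1 t * φ t 0, l2 t * φ t 1] from hmv t (φ t)] at h2
      exact h1.trans h2
    have hr2 : ∀ t ∈ I, ‖φd t 1 - l2 t * φ t 1‖ ≤ ε := by
      intro t ht
      have h1 := norm_le_pi_norm (φd t - (!![l1 t, 0; 0, l2 t]).mulVec (φ t)) 1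
      rw [Pi.sub_apply, hmv t (φ t)] at h1
      simp only [Matrix.cons_val_one, Matrix.head_cons] at h1
      have h2 := hφb t ht
      rw [show ((fun t => !![l1 t, 0; 0, l2 t]) t).mulVec (φ t)
        = ![l1 t * φ t 0, l2 t * φ t 1] from hmv t (φ t)] at h2
      exact h1.trans h2
    obtain ⟨x1, hx1sol, hx1b⟩ := comp1_stab hI1 hI2 hl1 hker1 ht₀I hε.le hp1 hc1 hr1
    obtain ⟨x2, hx2sol, hx2b⟩ := comp2_stab hI1 hI2 hl2 hker2 ht₀I hε.le hp2 hc2 hr2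
    refine ⟨fun u => ![x1 u, x2 u], ?_, ?_⟩
    · intro t ht
      rw [hmv t]
      refine hasDerivWithinAt_pi.mpr ?_
      intro i
      fin_cases i
      · simpa using hx1sol t ht
      · simpa using hx2sol t ht
    · intro t ht
      have hKsε : (0 : ℝ) ≤ sSup (kappa13 a b l1 l2 '' I) * ε := mul_nonneg hKs0.le hε.le
      rw [pi_norm_le_iff_of_nonneg hKsε]
      intro i
      fin_cases i
      · simp only [Pi.sub_apply, Matrix.cons_val_zero]
        calc ‖φ t 0 - x1 t‖
            ≤ ε * ∫ s in {s : ℝ | t < s ∧ (s : EReal) < b},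
              Real.exp (-∫ τ in t..s, (l1 τ).re) := hx1b t ht
          _ ≤ ε * kappa13 a b l1 l2 t := mul_le_mul_of_nonneg_left (le_max_left _ _) hε.le
          _ ≤ ε * sSup (kappa13 a b l1 l2 '' I) := mul_le_mul_of_nonneg_left (hkle t ht) hε.le
          _ = sSup (kappa13 a b l1 l2 '' I) * ε := mul_comm _ _
      · simp only [Pi.sub_apply, Matrix.cons_val_one, Matrix.head_cons]
        calc ‖φ t 1 - x2 t‖
            ≤ ε * ∫ s in {s : ℝ | a < (s : EReal) ∧ s < t},
              Real.exp (∫ τ in s..t, (l2 τ).re) := hx2b t ht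
          _ ≤ ε * kappa13 a b l1 l2 t := mul_le_mul_of_nonneg_left (le_max_right _ _) hε.le
          _ ≤ ε * sSup (kappa13 a b l1 l2 '' I) := mul_le_mul_of_nonneg_left (hkle t ht) hε.le
          _ = sSup (kappa13 a b l1 l2 '' I) * ε := mul_comm _ _
  · -- minimality
    intro K hK
    refine csSup_le ⟨_, mem_image_of_mem _ ht₀I⟩ ?_
    rintro v ⟨t, htI, rfl⟩
    set A1 : ℝ → ℝ := fun u => ∫ τ in t₀..u, (l1 τ).re with hA1def
    set A2 : ℝ → ℝ := fun u => ∫ τ in t₀..u, (l2 τ).re with hA2def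
    set F1 : ℝ → ℂ := fun u => ∫ τ in t₀..u, l1 τ with hF1def
    set F2 : ℝ → ℂ := fun u => ∫ τ in t₀..u, l2 τ with hF2def
    have hF1 : ∀ u ∈ I, HasDerivWithinAt F1 (l1 u) I u :=
      fun u hu => ftc_within hI1 hI2 hl1 ht₀I hu
    have hF2 : ∀ u ∈ I, HasDerivWithinAt F2 (l2 u) I u :=
      fun u hu => ftc_within hI1 hI2 hl2 ht₀I hu
    have hre1 : ∀ u ∈ I, (F1 u).re = A1 u := fun u hu =>
      interval_re ((hl1.mono (uIcc_subset_I hI1 hI2 ht₀I hu)).intervalIntegrable)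
    have hre2 : ∀ u ∈ I, (F2 u).re = A2 u := fun u hu =>
      interval_re ((hl2.mono (uIcc_subset_I hI1 hI2 ht₀I hu)).intervalIntegrable)
    have hadd1 : ∀ u ∈ I, ∀ s ∈ I, A1 s - A1 u = ∫ τ in u..s, (l1 τ).re := by
      intro u hu s hs
      have h1 : IntervalIntegrable (fun τ => (l1 τ).re) volume t₀ u :=
        ((hrel1.mono (uIcc_subset_I hI1 hI2 ht₀I hu)).intervalIntegrable)
      have h2 : IntervalIntegrable (fun τ => (l1 τ).re) volume u s :=
        ((hrel1.mono (uIcc_subset_I hI1 hI2 hu hs)).intervalIntegrable)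
      have h3 := intervalIntegral.integral_add_adjacent_intervals h1 h2
      simp only [hA1def]
      linarith [h3]
    have hadd2 : ∀ u ∈ I, ∀ s ∈ I, A2 s - A2 u = ∫ τ in u..s, (l2 τ).re := by
      intro u hu s hs
      have h1 : IntervalIntegrable (fun τ => (l2 τ).re) volume t₀ u :=
        ((hrel2.mono (uIcc_subset_I hI1 hI2 ht₀I hu)).intervalIntegrable)
      have h2 : IntervalIntegrable (fun τ => (l2 τ).re) volume u s :=
        ((hrel2.mono (uIcc_subset_I hI1 hI2 hu hs)).intervalIntegrable)
      have h3 := intervalIntegral.integral_add_adjacent_intervals h1 h2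
      simp only [hA2def]
      linarith [h3]
    set g1 : ℝ → ℝ := fun s => Real.exp (-A1 s) with hg1def
    set g2 : ℝ → ℝ := fun s => Real.exp (-A2 s) with hg2def
    have hA1c : ContinuousOn A1 I :=
      fun u hu => (ftc_within hI1 hI2 hrel1 ht₀I hu).continuousWithinAt
    have hA2c : ContinuousOn A2 I :=
      fun u hu => (ftc_within hI1 hI2 hrel2 ht₀I hu).continuousWithinAt
    have hg1c : ContinuousOn g1 I := Real.continuous_exp.comp_continuousOn hA1c.neg
    have hg2c : ContinuousOn g2 I := Real.continuous_exp.comp_continuousOn hA2c.neg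
    have hint1 : ∀ u ∈ I, IntegrableOn g1 {s : ℝ | u < s ∧ (s : EReal) < b} := by
      intro u hu
      have h0 : IntegrableOn (fun s => Real.exp (-A1 u) *
          Real.exp (-∫ τ in u..s, (l1 τ).re)) {s : ℝ | u < s ∧ (s : EReal) < b} :=
        (hker1 u hu).const_mul _
      refine h0.congr_fun ?_ (measJgt b u)
      intro s hs
      have hsI := Jgt_subset_I hI1 hI2 hu hs
      show Real.exp (-A1 u) * Real.exp (-∫ τ in u..s, (l1 τ).re) = Real.exp (-A1 s)
      rw [← hadd1 u hu s hsI, ← Real.exp_add]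
      congr 1
      ring
    have hint2 : ∀ u ∈ I, IntegrableOn g2 {s : ℝ | a < (s : EReal) ∧ s < u} := by
      intro u hu
      have h0 : IntegrableOn (fun s => Real.exp (-A2 u) *
          Real.exp (∫ τ in s..u, (l2 τ).re)) {s : ℝ | a < (s : EReal) ∧ s < u} :=
        (hker2 u hu).const_mul _
      refine h0.congr_fun ?_ (measJlt a u)
      intro s hs
      have hsI := Jlt_subset_I hI1 hI2 hu hs
      show Real.exp (-A2 u) * Real.exp (∫ τ in s..u, (l2 τ).re) = Real.exp (-A2 s)
      rw [← hadd2 s hsI u hu, ← Real.exp_add]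
      congr 1
      ring
    set G1 : ℝ → ℝ := fun u => ∫ s in {s : ℝ | u < s ∧ (s : EReal) < b}, g1 s with hG1def
    set G2 : ℝ → ℝ := fun u => ∫ s in {s : ℝ | a < (s : EReal) ∧ s < u}, g2 s with hG2def
    have hG1nn : ∀ u, 0 ≤ G1 u :=
      fun u => setIntegral_nonneg (measJgt b u) (fun s _ => Real.exp_nonneg _)
    have hG2nn : ∀ u, 0 ≤ G2 u :=
      fun u => setIntegral_nonneg (measJlt a u) (fun s _ => Real.exp_nonneg _)
    have hkey1 : ∀ u ∈ I, G1 t₀ = (∫ s in t₀..u, g1 s) + G1 u := by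
      intro u hu
      rcases le_total t₀ u with hle | hle
      · exact decomp_gt hle (hI2 u hu).2 (hint1 t₀ ht₀I)
      · have h2 := decomp_gt hle (hI2 t₀ ht₀I).2 (hint1 u hu)
        show (∫ s in {s : ℝ | t₀ < s ∧ (s : EReal) < b}, g1 s)
          = _ + ∫ s in {s : ℝ | u < s ∧ (s : EReal) < b}, g1 s
        rw [h2, intervalIntegral.integral_symm t₀ u]
        abel
    have hkey2 : ∀ u ∈ I, G2 u = (∫ s in t₀..u, g2 s) + G2 t₀ := by
      intro u hu
      rcases le_total t₀ u with hle | hle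
      · exact decomp_lt hle (hI2 t₀ ht₀I).1 (hint2 u hu)
      · have h2 := decomp_lt hle (hI2 u hu).1 (hint2 t₀ ht₀I)
        show (∫ s in {s : ℝ | a < (s : EReal) ∧ s < u}, g2 s)
          = _ + ∫ s in {s : ℝ | a < (s : EReal) ∧ s < t₀}, g2 s
        rw [h2, intervalIntegral.integral_symm t₀ u]
        abel
    have hG1d : ∀ u ∈ I, HasDerivWithinAt G1 (-(g1 u)) I u := by
      intro u hu
      have base := HasDerivWithinAt.const_sub (G1 t₀) (ftc_within hI1 hI2 hg1c ht₀I hu)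
      refine HasDerivWithinAt.congr base ?_ ?_
      · intro y hy
        have := hkey1 y hy
        linarith
      · have := hkey1 u hu
        linarith
    have hG2d : ∀ u ∈ I, HasDerivWithinAt G2 (g2 u) I u := by
      intro u hu
      have base := (ftc_within hI1 hI2 hg2c ht₀I hu).add_const (G2 t₀)
      refine HasDerivWithinAt.congr base ?_ ?_
      · intro y hy
        exact hkey2 y hy
      · exact hkey2 u hu
    have hpull1 : ∀ u ∈ I, Real.exp (A1 u) * G1 u
        = ∫ s in {s : ℝ | u < s ∧ (s : EReal) < b}, Real.exp (-∫ τ in u..s, (l1 τ).re) := by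
      intro u hu
      rw [hG1def]
      simp only
      rw [← integral_const_mul]
      refine setIntegral_congr_fun (measJgt b u) ?_
      intro s hs
      have hsI := Jgt_subset_I hI1 hI2 hu hs
      show Real.exp (A1 u) * Real.exp (-A1 s) = Real.exp (-∫ τ in u..s, (l1 τ).re)
      rw [← hadd1 u hu s hsI, ← Real.exp_add]
      congr 1
      ring
    have hpull2 : ∀ u ∈ I, Real.exp (A2 u) * G2 u
        = ∫ s in {s : ℝ | a < (s : EReal) ∧ s < u}, Real.exp (∫ τ in s..u, (l2 τ).re) := by
      intro u hu
      rw [hG2def]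
      simp only
      rw [← integral_const_mul]
      refine setIntegral_congr_fun (measJlt a u) ?_
      intro s hs
      have hsI := Jlt_subset_I hI1 hI2 hu hs
      show Real.exp (A2 u) * Real.exp (-A2 s) = Real.exp (∫ τ in s..u, (l2 τ).re)
      rw [← hadd2 s hsI u hu, ← Real.exp_add, sub_eq_add_neg]
    set φ1 : ℝ → ℂ := fun u => -(Complex.exp (F1 u) * (G1 u : ℂ)) with hφ1def
    set φ2 : ℝ → ℂ := fun u => Complex.exp (F2 u) * (G2 u : ℂ) with hφ2def
    set φ1d : ℝ → ℂ := fun u => l1 u * φ1 u + Complex.exp (F1 u) * (g1 u : ℂ) with hφ1ddef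
    set φ2d : ℝ → ℂ := fun u => l2 u * φ2 u + Complex.exp (F2 u) * (g2 u : ℂ) with hφ2ddef
    have hd1 : ∀ u ∈ I, HasDerivWithinAt φ1 (φ1d u) I u := by
      intro u hu
      have hexp := (Complex.hasDerivAt_exp (F1 u)).scomp_hasDerivWithinAt u (hF1 u hu)
      have hGc := (Complex.ofRealCLM.hasFDerivAt).comp_hasDerivWithinAt u (hG1d u hu)
      have hprod := (hexp.mul hGc).neg
      refine hprod.congr_deriv ?_
      simp only [hφ1ddef, hφ1def, Function.comp, smul_eq_mul, Complex.ofRealCLM_apply,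
        Complex.ofReal_neg]
      ring
    have hd2 : ∀ u ∈ I, HasDerivWithinAt φ2 (φ2d u) I u := by
      intro u hu
      have hexp := (Complex.hasDerivAt_exp (F2 u)).scomp_hasDerivWithinAt u (hF2 u hu)
      have hGc := (Complex.ofRealCLM.hasFDerivAt).comp_hasDerivWithinAt u (hG2d u hu)
      have hprod := hexp.mul hGc
      refine hprod.congr_deriv ?_
      simp only [hφ2ddef, hφ2def, Function.comp, smul_eq_mul, Complex.ofRealCLM_apply]
      ring
    have hφ1c : ContinuousOn φ1 I := fun u hu => (hd1 u hu).continuousWithinAt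
    have hφ2c : ContinuousOn φ2 I := fun u hu => (hd2 u hu).continuousWithinAt
    have hF1c : ContinuousOn F1 I := fun u hu => (hF1 u hu).continuousWithinAt
    have hF2c : ContinuousOn F2 I := fun u hu => (hF2 u hu).continuousWithinAt
    have hφ1dc : ContinuousOn φ1d I :=
      (hl1.mul hφ1c).add ((Complex.continuous_exp.comp_continuousOn hF1c).mul
        (Complex.continuous_ofReal.comp_continuousOn hg1c))
    have hφ2dc : ContinuousOn φ2d I :=
      (hl2.mul hφ2c).add ((Complex.continuous_exp.comp_continuousOn hF2c).mul
        (Complex.continuous_ofReal.comp_continuousOn hg2c))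
    have hφdcont : ContinuousOn (fun u => ![φ1d u, φ2d u]) I := by
      intro u hu
      refine continuousWithinAt_pi.mpr ?_
      intro i
      fin_cases i
      · simp only [Matrix.cons_val_zero]
        exact hφ1dc u hu
      · simp only [Matrix.cons_val_one, Matrix.head_cons]
        exact hφ2dc u hu
    have hder : ∀ u ∈ I, HasDerivWithinAt (fun v => ![φ1 v, φ2 v]) (![φ1d u, φ2d u]) I u := by
      intro u hu
      refine hasDerivWithinAt_pi.mpr ?_
      intro i
      fin_cases i
      · simpa using hd1 u hu
      · simpa using hd2 u hu
    have herr : ∀ u ∈ I, ‖(fun v => ![φ1d v, φ2d v]) u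
        - ((fun w => !![l1 w, 0; 0, l2 w]) u).mulVec ((fun v => ![φ1 v, φ2 v]) u)‖ ≤ 1 := by
      intro u hu
      rw [show ((fun w => !![l1 w, 0; 0, l2 w]) u).mulVec (![φ1 u, φ2 u])
        = ![l1 u * φ1 u, l2 u * φ2 u] from hmv u _]
      have hveq : (fun v => ![φ1d v, φ2d v]) u - ![l1 u * φ1 u, l2 u * φ2 u]
          = ![Complex.exp (F1 u) * (g1 u : ℂ), Complex.exp (F2 u) * (g2 u : ℂ)] := by
        funext i
        fin_cases i
        · simp only [Fin.mk_zero, Pi.sub_apply, Matrix.cons_val_zero, hφ1ddef]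
          ring
        · simp only [Fin.mk_one, Pi.sub_apply, Matrix.cons_val_one, Matrix.head_cons, Matrix.cons_val_zero, hφ2ddef]
          ring
      rw [hveq, pi_norm_le_iff_of_nonneg zero_le_one]
      intro i
      fin_cases i
      · simp only [Fin.mk_zero, Matrix.cons_val_zero]
        rw [norm_mul, Complex.norm_exp, hre1 u hu, Complex.norm_real,
          Real.norm_of_nonneg (Real.exp_nonneg _)]
        rw [← Real.exp_add]
        simp
      · simp only [Fin.mk_one, Matrix.cons_val_one, Matrix.head_cons, Matrix.cons_val_zero]
        rw [norm_mul, Complex.norm_exp, hre2 u hu, Complex.norm_real,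
          Real.norm_of_nonneg (Real.exp_nonneg _)]
        rw [← Real.exp_add]
        simp
    obtain ⟨x, hxsol, hxb⟩ := hK.2 1 one_pos _ _ hder hφdcont herr
    have hxb' : ∀ u ∈ I, ‖![φ1 u, φ2 u] - x u‖ ≤ K := by
      intro u hu
      have := hxb u hu
      rwa [mul_one] at this
    have hx1 : ∀ u ∈ I, HasDerivWithinAt (fun v => x v 0) (l1 u * x u 0) I u := by
      intro u hu
      have h1 := hasDerivWithinAt_pi.mp (hxsol u hu) 0
      rw [show ((fun w => !![l1 w, 0; 0, l2 w]) u).mulVec (x u)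
        = ![l1 u * x u 0, l2 u * x u 1] from hmv u _] at h1
      simpa using h1
    have hx2 : ∀ u ∈ I, HasDerivWithinAt (fun v => x v 1) (l2 u * x u 1) I u := by
      intro u hu
      have h1 := hasDerivWithinAt_pi.mp (hxsol u hu) 1
      rw [show ((fun w => !![l1 w, 0; 0, l2 w]) u).mulVec (x u)
        = ![l1 u * x u 0, l2 u * x u 1] from hmv u _] at h1
      simpa using h1
    have hs1 := sol_form hI1 hI2 hl1 ht₀I hx1
    have hs2 := sol_form hI1 hI2 hl2 ht₀I hx2
    have hb1 : ∀ u ∈ I, Real.exp (A1 u) * ‖(G1 u : ℂ) + x t₀ 0‖ ≤ K := by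
      intro u hu
      have h1 := (norm_le_pi_norm (![φ1 u, φ2 u] - x u) 0).trans (hxb' u hu)
      rw [Pi.sub_apply] at h1
      simp only [Matrix.cons_val_zero] at h1
      have h2 : φ1 u - x u 0 = -(Complex.exp (F1 u) * ((G1 u : ℂ) + x t₀ 0)) := by
        rw [hs1 u hu]
        simp only [hφ1def]
        ring
      rw [h2, norm_neg, norm_mul, Complex.norm_exp, hre1 u hu] at h1
      exact h1
    have hb2 : ∀ u ∈ I, Real.exp (A2 u) * ‖(G2 u : ℂ) + -(x t₀ 1)‖ ≤ K := by
      intro u hu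
      have h1 := (norm_le_pi_norm (![φ1 u, φ2 u] - x u) 1).trans (hxb' u hu)
      rw [Pi.sub_apply] at h1
      simp only [Matrix.cons_val_one, Matrix.head_cons, Matrix.cons_val_zero] at h1
      have h2 : φ2 u - x u 1 = Complex.exp (F2 u) * ((G2 u : ℂ) + -(x t₀ 1)) := by
        rw [hs2 u hu]
        simp only [hφ2def]
        ring
      rw [h2, norm_mul, Complex.norm_exp, hre2 u hu] at h1
      exact h1
    have hC1 : ∀ s ∈ I, Real.exp (A1 s) * G1 s ≤ sSup (kappa13 a b l1 l2 '' I) := by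
      intro s hs
      rw [hpull1 s hs]
      exact le_trans (le_max_left _ _) (hkle s hs)
    have hC2 : ∀ s ∈ I, Real.exp (A2 s) * G2 s ≤ sSup (kappa13 a b l1 l2 '' I) := by
      intro s hs
      rw [hpull2 s hs]
      exact le_trans (le_max_right _ _) (hkle s hs)
    have hc1z : x t₀ 0 = 0 := by
      by_contra hc
      exact growth_contra (I := I) hc (neBot_lb hab) (ev_lb hab hI1)
        ((hlim t₀ hat₀ ht₀b).1) ht₀I hb1 (fun s _ => hG1nn s) hC1
    have hc2z : x t₀ 1 = 0 := by
      by_contra hc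
      exact growth_contra (I := I) (neg_ne_zero.mpr hc) (neBot_la hab) (ev_la hab hI1)
        ((hlim t₀ hat₀ ht₀b).2) ht₀I hb2 (fun s _ => hG2nn s) hC2
    have hfin1 : (∫ s in {s : ℝ | t < s ∧ (s : EReal) < b},
        Real.exp (-∫ τ in t..s, (l1 τ).re)) ≤ K := by
      have h1 := hb1 t htI
      rw [hc1z, add_zero, Complex.norm_real, Real.norm_of_nonneg (hG1nn t), hpull1 t htI] at h1
      exact h1
    have hfin2 : (∫ s in {s : ℝ | a < (s : EReal) ∧ s < t},
        Real.exp (∫ τ in s..t, (l2 τ).re)) ≤ K := by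
      have h1 := hb2 t htI
      rw [hc2z, neg_zero, add_zero, Complex.norm_real, Real.norm_of_nonneg (hG2nn t),
        hpull2 t htI] at h1
      exact h1
    exact max_le hfin1 hfin2
end
end

section
/- Let λ₁, λ₂ ∈ ℂ with Re(λ₁)·Re(λ₂) ≠ 0, and let A be the constant diagonal matrix with entries λ₁, λ₂. Then the system x' = Ax is Ulam stable on ℝ with respect to the maximum norm on ℂ², and its best (minimal) Ulam constant is K_{c1} := max{ 1/|Re λ₁|, 1/|Re λ₂| }; that is, K_{c1} is an Ulam constant for x' = Ax on ℝ and every Ulam constant K for x' = Ax on ℝ satisfies K ≥ K_{c1}. -/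
open MeasureTheory Filter Set

noncomputable section

section Aux
open Complex Topology



lemma exp_decay_integral (b : ℝ) (hb : 0 < b) (t : ℝ) :
    ∫ u in Set.Ioi t, Real.exp (-b * u) = Real.exp (-b * t) / b := by
  have hderiv : ∀ x ∈ Ici t, HasDerivAt (fun u => -Real.exp (-b * u) / b) (Real.exp (-b * x)) x := by
    intro x _
    have : HasDerivAt (fun u : ℝ => -b * u) (-b) x := by simpa using (hasDerivAt_id x).const_mul (-b)
    have h2 := (this.exp).neg.div_const b
    refine h2.congr_deriv ?_
    rw [mul_neg, neg_neg, mul_div_assoc, div_self hb.ne', mul_one]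
  have htend : Tendsto (fun u => -Real.exp (-b * u) / b) atTop (𝓝 (-0 / b)) := by
    refine Tendsto.div_const (Tendsto.neg ?_) _
    exact Real.tendsto_exp_atBot.comp (tendsto_id.const_mul_atTop_of_neg (neg_neg_iff_pos.2 hb))
  have := integral_Ioi_of_hasDerivAt_of_tendsto' hderiv (exp_neg_integrableOn_Ioi t hb) htend
  rw [this]; field_simp; ring

lemma hasDerivAt_cexp_mul (l : ℂ) (t : ℝ) :
    HasDerivAt (fun s : ℝ => Complex.exp (l * s)) (l * Complex.exp (l * t)) t := by
  have h1 : HasDerivAt (fun s : ℝ => l * (s : ℂ)) l t := by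
    simpa using (Complex.ofRealCLM.hasDerivAt (x := t)).const_mul l
  simpa [mul_comm] using h1.cexp

lemma norm_cexp_mul (l : ℂ) (t : ℝ) : ‖Complex.exp (l * t)‖ = Real.exp (l.re * t) := by
  simp [Complex.norm_exp, Complex.mul_re]

lemma scalar_pos (l : ℂ) (hl : 0 < l.re) (ε : ℝ)
    (φ φd : ℝ → ℂ) (hφ : ∀ t, HasDerivAt φ (φd t) t) (hcd : Continuous φd)
    (hbd : ∀ t, ‖φd t - l * φ t‖ ≤ ε) :
    ∃ c : ℂ, ∀ t : ℝ, ‖φ t - c * Complex.exp (l * t)‖ ≤ ε / l.re := by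
  set b := l.re with hbdef
  set E : ℝ → ℂ := fun t => Complex.exp (-l * t) with hE
  set g : ℝ → ℂ := fun t => φ t * E t with hg
  set g' : ℝ → ℂ := fun t => (φd t - l * φ t) * E t with hg'
  have hφc : Continuous φ := by
    rw [continuous_iff_continuousAt]; exact fun t => (hφ t).continuousAt
  have hgd : ∀ t, HasDerivAt g (g' t) t := by
    intro t
    have := (hφ t).mul (hasDerivAt_cexp_mul (-l) t)
    refine this.congr_deriv ?_
    simp only [g', E]; ring
  have hcg' : Continuous g' := by
    apply Continuous.mul (hcd.sub (continuous_const.mul hφc))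
    exact Complex.continuous_exp.comp (continuous_const.mul Complex.continuous_ofReal)
  have hEnorm : ∀ t : ℝ, ‖E t‖ = Real.exp (-b * t) := by
    intro t
    have := norm_cexp_mul (-l) t
    simpa [hE, hbdef, neg_mul] using this
  have hg'bd : ∀ t, ‖g' t‖ ≤ ε * Real.exp (-b * t) := by
    intro t
    rw [hg', norm_mul, hEnorm]
    exact mul_le_mul_of_nonneg_right (hbd t) (Real.exp_pos _).le
  have hIntBd : ∀ t : ℝ, IntegrableOn (fun u => ε * Real.exp (-b * u)) (Set.Ioi t) :=
    fun t => (exp_neg_integrableOn_Ioi t hl).const_mul ε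
  have hInt : ∀ t : ℝ, IntegrableOn g' (Set.Ioi t) := by
    intro t
    exact Integrable.mono' (hIntBd t) hcg'.aestronglyMeasurable.restrict
      (ae_of_all _ fun u => hg'bd u)
  set I : ℝ → ℂ := fun t => ∫ u in Set.Ioi t, g' u with hI
  have hkey : ∀ t, g t + I t = g 0 + I 0 := by
    intro t
    have H : ∀ r : ℝ, Tendsto g atTop (𝓝 (g r + I r)) := by
      intro r
      have h1 : Tendsto (fun s => ∫ u in r..s, g' u) atTop (𝓝 (I r)) :=
        intervalIntegral_tendsto_integral_Ioi r (hInt r) tendsto_id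
      have h2 : ∀ s : ℝ, g s = g r + ∫ u in r..s, g' u := by
        intro s
        rw [intervalIntegral.integral_eq_sub_of_hasDerivAt (fun u _ => hgd u)
          (hcg'.intervalIntegrable r s)]
        ring
      exact ((tendsto_const_nhds.add h1).congr (fun s => (h2 s).symm))
    exact tendsto_nhds_unique (H t) (H 0)
  refine ⟨g 0 + I 0, fun t => ?_⟩
  have hgc : g t - (g 0 + I 0) = -I t := by rw [← hkey t]; ring
  have hInorm : ‖I t‖ ≤ ε * Real.exp (-b * t) / b := by
    have h1 : ‖I t‖ ≤ ∫ u in Set.Ioi t, ε * Real.exp (-b * u) :=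
      norm_integral_le_of_norm_le (hIntBd t) (ae_of_all _ fun u => hg'bd u)
    rwa [MeasureTheory.integral_const_mul, exp_decay_integral b hl t, ← mul_div_assoc] at h1
  have hexp1 : E t * Complex.exp (l * t) = 1 := by
    rw [hE, ← Complex.exp_add]
    norm_num
  have hfact : φ t - (g 0 + I 0) * Complex.exp (l * t)
      = (g t - (g 0 + I 0)) * Complex.exp (l * t) := by
    simp only [hg]
    linear_combination (-φ t) * hexp1
  rw [hfact, hgc, norm_mul, norm_neg, norm_cexp_mul]
  calc ‖I t‖ * Real.exp (b * t) ≤ (ε * Real.exp (-b * t) / b) * Real.exp (b * t) :=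
        mul_le_mul_of_nonneg_right hInorm (Real.exp_pos _).le
    _ = ε / b * (Real.exp (-b * t) * Real.exp (b * t)) := by ring
    _ = ε / b := by rw [← Real.exp_add]; norm_num

lemma scalar_ne (l : ℂ) (hl : l.re ≠ 0) (ε : ℝ)
    (φ φd : ℝ → ℂ) (hφ : ∀ t, HasDerivAt φ (φd t) t) (hcd : Continuous φd)
    (hbd : ∀ t, ‖φd t - l * φ t‖ ≤ ε) :
    ∃ c : ℂ, ∀ t : ℝ, ‖φ t - c * Complex.exp (l * t)‖ ≤ ε / |l.re| := by
  rcases hl.lt_or_gt with hneg | hpos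
  · -- reflect
    set ψ : ℝ → ℂ := fun t => φ (-t) with hψ
    set ψd : ℝ → ℂ := fun t => -φd (-t) with hψd
    have hψdiff : ∀ t, HasDerivAt ψ (ψd t) t := by
      intro t
      have h0 : HasDerivAt (fun s : ℝ => -s) (-1 : ℝ) t := hasDerivAt_neg t
      have h1 := (hφ (-t)).scomp t h0
      exact (by simpa using h1 : HasDerivAt (φ ∘ Neg.neg) (-φd (-t)) t)
    have hψcd : Continuous ψd := (hcd.comp continuous_neg).neg
    have hψbd : ∀ t, ‖ψd t - (-l) * ψ t‖ ≤ ε := by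
      intro t
      have : ψd t - (-l) * ψ t = -(φd (-t) - l * φ (-t)) := by simp [hψ, hψd]; ring
      rw [this, norm_neg]; exact hbd (-t)
    have hre : 0 < (-l).re := by simpa using hneg
    obtain ⟨c, hc⟩ := scalar_pos (-l) hre ε ψ ψd hψdiff hψcd hψbd
    refine ⟨c, fun t => ?_⟩
    have := hc (-t)
    have habs : |l.re| = -l.re := abs_of_neg hneg
    have harg : (-l) * ((-t : ℝ) : ℂ) = l * t := by push_cast; ring
    rw [harg] at this
    simpa [hψ, habs] using this
  · obtain ⟨c, hc⟩ := scalar_pos l hpos ε φ φd hφ hcd hbd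
    exact ⟨c, fun t => by simpa [abs_of_pos hpos] using hc t⟩


lemma hasDerivAt_cexp_mul' (l : ℂ) (t : ℝ) :
    HasDerivAt (fun s : ℝ => Complex.exp (l * s)) (l * Complex.exp (l * t)) t := by
  have h1 : HasDerivAt (fun s : ℝ => l * (s : ℂ)) l t := by
    simpa using (Complex.ofRealCLM.hasDerivAt (x := t)).const_mul l
  simpa [mul_comm] using h1.cexp

lemma norm_cexp_mul' (l : ℂ) (t : ℝ) : ‖Complex.exp (l * t)‖ = Real.exp (l.re * t) := by
  simp [Complex.norm_exp, Complex.mul_re]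

lemma norm_exp_im' (b t : ℝ) : ‖Complex.exp ((b : ℂ) * Complex.I * t)‖ = 1 := by
  rw [Complex.norm_exp]
  have h : ((b : ℂ) * Complex.I * t).re = 0 := by simp [Complex.mul_re, Complex.mul_im]
  rw [h, Real.exp_zero]

lemma mulVec0 (l1 l2 : ℂ) (v : Fin 2 → ℂ) : (!![l1,0;0,l2]).mulVec v 0 = l1 * v 0 := by
  simp [Matrix.mulVec, dotProduct, Fin.sum_univ_two]

lemma mulVec1 (l1 l2 : ℂ) (v : Fin 2 → ℂ) : (!![l1,0;0,l2]).mulVec v 1 = l2 * v 1 := by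
  simp [Matrix.mulVec, dotProduct, Fin.sum_univ_two]

lemma lower_aux (l : ℂ) (hl : l.re ≠ 0) (K : ℝ) (xj : ℝ → ℂ)
    (hxj : ∀ t, HasDerivAt xj (l * xj t) t)
    (hbd : ∀ t : ℝ, ‖((1/l.re : ℝ) : ℂ) * Complex.exp ((l.im : ℂ) * Complex.I * t) - xj t‖ ≤ K) :
    1/|l.re| ≤ K := by
  have hy : ∀ t, HasDerivAt (fun s => xj s * Complex.exp (-l * s)) 0 t := by
    intro t
    have h1 := (hxj t).mul (hasDerivAt_cexp_mul' (-l) t)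
    refine h1.congr_deriv ?_
    ring
  have hconst : ∀ t : ℝ, xj t * Complex.exp (-l * t) = xj 0 := by
    intro t
    have h0 := is_const_of_deriv_eq_zero (f := fun s : ℝ => xj s * Complex.exp (-l * s))
      (fun s => (hy s).differentiableAt) (fun s => (hy s).deriv) t 0
    simpa using h0
  have hxval : ∀ t : ℝ, xj t = xj 0 * Complex.exp (l * t) := by
    intro t
    have h2 : Complex.exp (-l * t) * Complex.exp (l * t) = 1 := by
      rw [← Complex.exp_add]; norm_num
    calc xj t = xj t * (Complex.exp (-l * t) * Complex.exp (l * t)) := by rw [h2, mul_one]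
      _ = (xj t * Complex.exp (-l * t)) * Complex.exp (l * t) := by ring
      _ = xj 0 * Complex.exp (l * t) := by rw [hconst t]
  have hφnorm : ∀ t : ℝ, ‖((1/l.re : ℝ) : ℂ) * Complex.exp ((l.im : ℂ) * Complex.I * t)‖
      = 1/|l.re| := by
    intro t
    rw [norm_mul, norm_exp_im', mul_one, Complex.norm_real, Real.norm_eq_abs, abs_div, abs_one]
  have hK0 : 0 ≤ K := le_trans (norm_nonneg _) (hbd 0)
  have hapos : 0 < 1/|l.re| := one_div_pos.2 (abs_pos.2 hl)
  have hx0 : xj 0 = 0 := by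
    by_contra hne
    have hxn : 0 < ‖xj 0‖ := norm_pos_iff.2 hne
    set M := K + 1/|l.re| + 1 with hM
    have hMpos : 0 < M := by rw [hM]; linarith
    set t := Real.log (M / ‖xj 0‖) / l.re with ht
    have hat : l.re * t = Real.log (M / ‖xj 0‖) := by
      rw [ht]; field_simp
    have hxt : ‖xj t‖ = M := by
      rw [hxval t, norm_mul, norm_cexp_mul', hat, Real.exp_log (by positivity), mul_comm,
        div_mul_cancel₀ M (ne_of_gt hxn)]
    have h1 := hbd t
    have h2 : ‖xj t‖ - ‖((1/l.re : ℝ) : ℂ) * Complex.exp ((l.im : ℂ) * Complex.I * t)‖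
        ≤ ‖((1/l.re : ℝ) : ℂ) * Complex.exp ((l.im : ℂ) * Complex.I * t) - xj t‖ := by
      rw [norm_sub_rev]
      exact norm_sub_norm_le _ _
    rw [hxt, hφnorm] at h2
    linarith [h2.trans h1]
  have h1 := hbd 0
  rw [hxval 0, hx0, zero_mul, sub_zero, hφnorm] at h1
  exact h1


theorem main_aux (l1 l2 : ℂ) (h : l1.re * l2.re ≠ 0) :
    UlamStable2C Set.univ (fun _ => !![l1, 0; 0, l2])
      (max (1 / |l1.re|) (1 / |l2.re|)) ∧
    ∀ K : ℝ, UlamStable2C Set.univ (fun _ => !![l1, 0; 0, l2]) K →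
      max (1 / |l1.re|) (1 / |l2.re|) ≤ K := by
  obtain ⟨ha1, ha2⟩ := mul_ne_zero_iff.mp h
  have hK1 : (0:ℝ) < 1 / |l1.re| := one_div_pos.2 (abs_pos.2 ha1)
  have hK2 : (0:ℝ) < 1 / |l2.re| := one_div_pos.2 (abs_pos.2 ha2)
  set K₀ := max (1 / |l1.re|) (1 / |l2.re|) with hK₀
  have hK₀pos : 0 < K₀ := lt_max_of_lt_left hK1
  constructor
  · refine ⟨hK₀pos, ?_⟩
    intro ε hε φ φd hderiv hcont hbound
    have hd : ∀ t, HasDerivAt φ (φd t) t :=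
      fun t => hasDerivWithinAt_univ.mp (hderiv t trivial)
    have hcd : Continuous φd := continuousOn_univ.mp hcont
    have comp0 : ∀ t, HasDerivAt (fun s => φ s 0) (φd t 0) t :=
      fun t => (hasDerivAt_pi.mp (hd t)) 0
    have comp1 : ∀ t, HasDerivAt (fun s => φ s 1) (φd t 1) t :=
      fun t => (hasDerivAt_pi.mp (hd t)) 1
    have cont0 : Continuous (fun t => φd t 0) := (continuous_apply 0).comp hcd
    have cont1 : Continuous (fun t => φd t 1) := (continuous_apply 1).comp hcd
    have bound0 : ∀ t, ‖φd t 0 - l1 * φ t 0‖ ≤ ε := by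
      intro t
      have h2 := norm_le_pi_norm (φd t - (!![l1,0;0,l2]).mulVec (φ t)) 0
      rw [Pi.sub_apply, mulVec0] at h2
      exact h2.trans (hbound t trivial)
    have bound1 : ∀ t, ‖φd t 1 - l2 * φ t 1‖ ≤ ε := by
      intro t
      have h2 := norm_le_pi_norm (φd t - (!![l1,0;0,l2]).mulVec (φ t)) 1
      rw [Pi.sub_apply, mulVec1] at h2
      exact h2.trans (hbound t trivial)
    obtain ⟨c0, hc0⟩ := scalar_ne l1 ha1 ε _ _ comp0 cont0 bound0
    obtain ⟨c1, hc1⟩ := scalar_ne l2 ha2 ε _ _ comp1 cont1 bound1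
    refine ⟨fun t => ![c0 * Complex.exp (l1 * t), c1 * Complex.exp (l2 * t)], ?_, ?_⟩
    · intro t _
      rw [hasDerivWithinAt_univ]
      apply hasDerivAt_pi.mpr
      intro i
      fin_cases i
      · have h1 := (hasDerivAt_cexp_mul' l1 t).const_mul c0
        refine h1.congr_deriv ?_
        simp [Matrix.mulVec, dotProduct, Fin.sum_univ_two]
        try ring
      · have h1 := (hasDerivAt_cexp_mul' l2 t).const_mul c1
        refine h1.congr_deriv ?_
        simp [Matrix.mulVec, dotProduct, Fin.sum_univ_two]
        try ring
    · intro t _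
      refine (pi_norm_le_iff_of_nonneg (mul_nonneg hK₀pos.le hε.le)).2 ?_
      intro i
      fin_cases i
      · simp only [Pi.sub_apply, Matrix.cons_val_zero]
        calc ‖φ t 0 - c0 * Complex.exp (l1 * t)‖ ≤ ε / |l1.re| := hc0 t
          _ = (1 / |l1.re|) * ε := by ring
          _ ≤ K₀ * ε := mul_le_mul_of_nonneg_right (le_max_left _ _) hε.le
      · simp only [Pi.sub_apply, Matrix.cons_val_one, Matrix.head_cons]
        calc ‖φ t 1 - c1 * Complex.exp (l2 * t)‖ ≤ ε / |l2.re| := hc1 t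
          _ = (1 / |l2.re|) * ε := by ring
          _ ≤ K₀ * ε := mul_le_mul_of_nonneg_right (le_max_right _ _) hε.le
  · rintro K ⟨hKpos, hmain⟩
    set p : ℂ → ℝ → ℂ :=
      fun l t => ((1/l.re : ℝ) : ℂ) * Complex.exp ((l.im : ℂ) * Complex.I * t) with hp
    set pd : ℂ → ℝ → ℂ :=
      fun l t => ((1/l.re : ℝ) : ℂ) *
        ((l.im : ℂ) * Complex.I * Complex.exp ((l.im : ℂ) * Complex.I * t)) with hpd
    have hpderiv : ∀ l (t : ℝ), HasDerivAt (p l) (pd l t) t :=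
      fun l t => (hasDerivAt_cexp_mul' ((l.im : ℂ) * Complex.I) t).const_mul _
    have hpcont : ∀ l : ℂ, Continuous (pd l) := by
      intro l
      exact continuous_const.mul (continuous_const.mul
        (Complex.continuous_exp.comp (continuous_const.mul Complex.continuous_ofReal)))
    have hkey : ∀ (l : ℂ), l.re ≠ 0 → ∀ t : ℝ,
        pd l t - l * p l t = -Complex.exp ((l.im : ℂ) * Complex.I * t) := by
      intro l hl t
      have ha : (l.re : ℂ) ≠ 0 := Complex.ofReal_ne_zero.2 hl
      have hrei : (l.re : ℂ) + (l.im : ℂ) * Complex.I = l := Complex.re_add_im l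
      simp only [hp, hpd]
      push_cast
      field_simp
      linear_combination hrei
    set φ : ℝ → Fin 2 → ℂ := fun t => ![p l1 t, p l2 t] with hφ
    set φd : ℝ → Fin 2 → ℂ := fun t => ![pd l1 t, pd l2 t] with hφd
    obtain ⟨x, hxde, hxbd⟩ := hmain 1 one_pos φ φd
      (by
        intro t _
        rw [hasDerivWithinAt_univ]
        apply hasDerivAt_pi.mpr
        intro i
        fin_cases i
        · simpa [φ, φd] using hpderiv l1 t
        · simpa [φ, φd] using hpderiv l2 t)
      (by
        refine Continuous.continuousOn ?_
        refine continuous_pi fun i => ?_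
        fin_cases i
        · simpa [φd] using hpcont l1
        · simpa [φd] using hpcont l2)
      (by
        intro t _
        refine (pi_norm_le_iff_of_nonneg zero_le_one).2 ?_
        rw [Fin.forall_fin_two]
        constructor
        · have hk := hkey l1 ha1 t
          simp only [Pi.sub_apply]
          simp only [hφ, hφd, Matrix.mulVec, dotProduct, Fin.sum_univ_two]
          have e00 : !![l1,(0:ℂ);0,l2] 0 0 = l1 := rfl
          have e01 : !![l1,(0:ℂ);0,l2] 0 1 = 0 := rfl
          rw [e00, e01, zero_mul, add_zero]
          simp only [Matrix.cons_val_zero]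
          rw [hk, norm_neg, norm_exp_im']
        · have hk := hkey l2 ha2 t
          simp only [Pi.sub_apply]
          simp only [hφ, hφd, Matrix.mulVec, dotProduct, Fin.sum_univ_two]
          have e10 : !![l1,(0:ℂ);0,l2] 1 0 = 0 := rfl
          have e11 : !![l1,(0:ℂ);0,l2] 1 1 = l2 := rfl
          rw [e10, e11, zero_mul, zero_add]
          simp only [Matrix.cons_val_one, Matrix.head_cons, Matrix.cons_val_zero]
          rw [hk, norm_neg, norm_exp_im'])
    have hx0 : ∀ t, HasDerivAt (fun s => x s 0) (l1 * x t 0) t := by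
      intro t
      have h1 := (hasDerivAt_pi.mp (hasDerivWithinAt_univ.mp (hxde t trivial))) 0
      rwa [mulVec0] at h1
    have hx1 : ∀ t, HasDerivAt (fun s => x s 1) (l2 * x t 1) t := by
      intro t
      have h1 := (hasDerivAt_pi.mp (hasDerivWithinAt_univ.mp (hxde t trivial))) 1
      rwa [mulVec1] at h1
    have hb0 : ∀ t : ℝ,
        ‖((1/l1.re : ℝ) : ℂ) * Complex.exp ((l1.im : ℂ) * Complex.I * t) - x t 0‖ ≤ K := by
      intro t
      have h2 := norm_le_pi_norm (φ t - x t) 0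
      rw [Pi.sub_apply] at h2
      have h3 := (h2.trans (hxbd t trivial))
      rw [mul_one] at h3
      simpa [hφ, hp] using h3
    have hb1 : ∀ t : ℝ,
        ‖((1/l2.re : ℝ) : ℂ) * Complex.exp ((l2.im : ℂ) * Complex.I * t) - x t 1‖ ≤ K := by
      intro t
      have h2 := norm_le_pi_norm (φ t - x t) 1
      rw [Pi.sub_apply] at h2
      have h3 := (h2.trans (hxbd t trivial))
      rw [mul_one] at h3
      simpa [hφ, hp] using h3
    exact max_le (lower_aux l1 ha1 K _ hx0 hb0) (lower_aux l2 ha2 K _ hx1 hb1)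

end Aux

theorem statement9 (l1 l2 : ℂ) (h : l1.re * l2.re ≠ 0) :
    UlamStable2C Set.univ (fun _ => !![l1, 0; 0, l2])
      (max (1 / |l1.re|) (1 / |l2.re|)) ∧
    ∀ K : ℝ, UlamStable2C Set.univ (fun _ => !![l1, 0; 0, l2]) K →
      max (1 / |l1.re|) (1 / |l2.re|) ≤ K := by
  exact main_aux l1 l2 h
end
end

section
/- Let −∞ ≤ a < b ≤ ∞ and let I be one of the intervals (a,b), (a,b], [a,b), [a,b]. Let λ, μ : I → ℂ be continuous and let A(t) be the upper-triangular matrix with diagonal entries λ(t), λ(t) and upper-right entry μ(t). Suppose that κ₂₂(t) := ∫_a^t (1 + |∫_s^t μ(τ) dτ|) e^{∫_s^t Re λ(τ) dτ} ds exists (as a finite, possibly improper, integral) for all t ∈ I, and that K₂₂ := sup_{t∈I} κ₂₂(t) < ∞. Then the system x' = A(t)x is Ulam stable on I with Ulam constant K₂₂ (with respect to the maximum norm on ℂ²). Furthermore, if in addition lim_{t→a⁺} ∫_t^{t₀} Re λ(s) ds = −∞ for t₀ ∈ (a,b), then for every ε > 0 and every continuously differentiable φ : I → ℂ² with sup_{t∈I}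 ‖φ'(t) − A(t)φ(t)‖∞ ≤ ε, there exists a unique solution x of x' = A(t)x satisfying sup_{t∈I} ‖φ(t) − x(t)‖∞ ≤ K₂₂ε. -/
open MeasureTheory Filter Set

noncomputable section

/-- `κ₂₂(t) = ∫_a^t (1 + |∫_s^t μ|) exp(∫_s^t Re λ) ds`. -/
def kappa22 (a : EReal) (l m : ℝ → ℂ) (t : ℝ) : ℝ :=
  ∫ s in {s : ℝ | a < (s : EReal) ∧ s < t},
    (1 + ‖∫ τ in s..t, m τ‖) * Real.exp (∫ τ in s..t, (l τ).re)


lemma ftc_helper {I : Set ℝ} (hI : Convex ℝ I) {g F : ℝ → ℂ} (hg : ContinuousOn g I)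
    (hF : ∀ u ∈ I, ∀ v ∈ I, F v - F u = ∫ τ in u..v, g τ) {t : ℝ} (ht : t ∈ I) :
    HasDerivWithinAt F (g t) I t := by
  rw [hasDerivWithinAt_iff_isLittleO, Asymptotics.isLittleO_iff]
  intro δ hδ
  obtain ⟨r, hr, hball⟩ := Metric.continuousWithinAt_iff.1 (hg t ht) δ hδ
  filter_upwards [inter_mem_nhdsWithin I (Metric.ball_mem_nhds t hr)]
  rintro τ ⟨hτI, hτb⟩
  have huIcc : uIcc t τ ⊆ I := (hI.ordConnected).uIcc_subset ht hτI
  have hint : IntervalIntegrable g volume t τ := (hg.mono huIcc).intervalIntegrable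
  have key : F τ - F t - (τ - t) • g t = ∫ u in t..τ, (g u - g t) := by
    rw [intervalIntegral.integral_sub hint intervalIntegrable_const,
        intervalIntegral.integral_const, hF t ht τ hτI]
  rw [key]
  have hb : ∀ u ∈ Set.uIoc t τ, ‖g u - g t‖ ≤ δ := by
    intro u hu
    have huI : u ∈ I := huIcc (Set.uIoc_subset_uIcc hu)
    have h1 : t ⊓ τ < u ∧ u ≤ t ⊔ τ := ⟨hu.1, hu.2⟩
    have hτt : |τ - t| < r := by simpa [Real.dist_eq] using hτb
    have hd : dist u t < r := by
      rw [Real.dist_eq]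
      rcases le_total t τ with h | h
      · simp [inf_eq_left.2 h, sup_eq_right.2 h] at h1
        rw [abs_of_nonneg (by linarith [h1.1])]
        rw [abs_of_nonneg (by linarith)] at hτt; linarith [h1.2]
      · simp [inf_eq_right.2 h, sup_eq_left.2 h] at h1
        rw [abs_of_nonpos (by linarith [h1.2])]
        rw [abs_of_nonpos (by linarith)] at hτt; linarith [h1.1]
    have := hball huI hd
    rw [dist_eq_norm] at this; exact this.le
  calc ‖∫ u in t..τ, (g u - g t)‖ ≤ δ * |τ - t| :=
        intervalIntegral.norm_integral_le_of_norm_le_const hb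
    _ = δ * ‖τ - t‖ := by rw [Real.norm_eq_abs]

lemma re_intervalIntegral {f : ℝ → ℂ} {u v : ℝ} (hf : IntervalIntegrable f volume u v) :
    (∫ τ in u..v, f τ).re = ∫ τ in u..v, (f τ).re := by
  have h1 := integral_re hf.1
  have h2 := integral_re hf.2
  simp only [RCLike.re_to_complex] at h1 h2
  rw [intervalIntegral, intervalIntegral, Complex.sub_re, ← h1, ← h2]

lemma split_lemma (a : EReal) {g : ℝ → ℂ} {u v : ℝ} (hau : a ≤ (u : EReal)) (huv : u ≤ v)
    (hgv : IntegrableOn g {s : ℝ | a < (s : EReal) ∧ s < v})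
    (hguv : IntegrableOn g (Ioc u v)) :
    ∫ s in {s : ℝ | a < (s : EReal) ∧ s < v}, g s
      = (∫ s in {s : ℝ | a < (s : EReal) ∧ s < u}, g s) + ∫ s in u..v, g s := by
  have hmeas1 : MeasurableSet {s : ℝ | a < (s : EReal)} :=
    continuous_coe_real_ereal.measurable measurableSet_Ioi
  have hsplit : {s : ℝ | a < (s : EReal) ∧ s < v}
      = {s : ℝ | a < (s : EReal) ∧ s < u} ∪ ({s : ℝ | a < (s : EReal)} ∩ Ico u v) := by
    ext s
    simp only [mem_setOf_eq, mem_union, mem_inter_iff, mem_Ico]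
    constructor
    · rintro ⟨h1, h2⟩
      rcases lt_or_ge s u with h | h
      · exact Or.inl ⟨h1, h⟩
      · exact Or.inr ⟨h1, h, h2⟩
    · rintro (⟨h1, h2⟩ | ⟨h1, h2, h3⟩)
      · exact ⟨h1, h2.trans_le huv⟩
      · exact ⟨h1, h3⟩
  have hae : ({s : ℝ | a < (s : EReal)} ∩ Ico u v : Set ℝ) =ᵐ[volume] Ioc u v := by
    rw [MeasureTheory.ae_eq_set]
    constructor
    · refine measure_mono_null (fun x hx => ?_) ((Set.countable_singleton u).measure_zero _)
      simp only [mem_diff, mem_inter_iff, mem_Ico, mem_Ioc, mem_setOf_eq, not_and, not_le,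
        mem_singleton_iff] at hx ⊢
      rcases hx with ⟨⟨_, h2, h3⟩, h4⟩
      by_contra h
      rcases lt_or_eq_of_le h2 with h' | h'
      · exact absurd (h4 h') (not_lt.2 h3.le)
      · exact h h'.symm
    · refine measure_mono_null (fun x hx => ?_) ((Set.countable_singleton v).measure_zero _)
      simp only [mem_diff, mem_inter_iff, mem_Ico, mem_Ioc, mem_setOf_eq, not_and,
        mem_singleton_iff] at hx ⊢
      rcases hx with ⟨⟨h1, h2⟩, h3⟩
      by_contra h
      have hax : a < (x : EReal) := lt_of_le_of_lt hau (by exact_mod_cast h1)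
      have := h3 hax h1.le
      rw [not_lt] at this
      exact h (le_antisymm h2 this)
  have hdisj : Disjoint {s : ℝ | a < (s : EReal) ∧ s < u} ({s : ℝ | a < (s : EReal)} ∩ Ico u v) := by
    rw [Set.disjoint_left]
    rintro s ⟨_, h2⟩ ⟨_, h3, _⟩
    exact absurd h3 (not_le.2 h2)
  have hsub1 : {s : ℝ | a < (s : EReal) ∧ s < u} ⊆ {s : ℝ | a < (s : EReal) ∧ s < v} :=
    fun s hs => ⟨hs.1, hs.2.trans_le huv⟩
  rw [hsplit, setIntegral_union hdisj (hmeas1.inter measurableSet_Ico)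
      (hgv.mono_set (hsplit ▸ hsub1)) (hguv.congr_set_ae hae),
    setIntegral_congr_set hae, intervalIntegral.integral_of_le huv]

lemma I_ordConn {a b : EReal} {I : Set ℝ}
    (hI1 : ∀ x : ℝ, a < (x : EReal) → (x : EReal) < b → x ∈ I)
    (hI2 : ∀ x ∈ I, a ≤ (x : EReal) ∧ (x : EReal) ≤ b) : OrdConnected I := by
  constructor
  rintro x hx y hy z ⟨hxz, hzy⟩
  rcases lt_or_eq_of_le ((hI2 x hx).1.trans (EReal.coe_le_coe_iff.2 hxz)) with h | h
  · rcases lt_or_eq_of_le ((EReal.coe_le_coe_iff.2 hzy).trans (hI2 y hy).2) with h' | h'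
    · exact hI1 z h h'
    · have : y = z := le_antisymm (EReal.coe_le_coe_iff.1 (h' ▸ (hI2 y hy).2)) hzy
      exact this ▸ hy
  · have : x = z := le_antisymm hxz (EReal.coe_le_coe_iff.1 (h ▸ (hI2 x hx).1))
    exact this ▸ hx

lemma exists_sol (a b : EReal) (hab : a < b) (I : Set ℝ)
    (hI1 : ∀ x : ℝ, a < (x : EReal) → (x : EReal) < b → x ∈ I)
    (hI2 : ∀ x ∈ I, a ≤ (x : EReal) ∧ (x : EReal) ≤ b)
    (l m : ℝ → ℂ) (hl : ContinuousOn l I) (hm : ContinuousOn m I)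
    (hker : ∀ t ∈ I, IntegrableOn
      (fun s => (1 + ‖∫ τ in s..t, m τ‖) * Real.exp (∫ τ in s..t, (l τ).re))
      {s : ℝ | a < (s : EReal) ∧ s < t})
    (hbdd : BddAbove (kappa22 a l m '' I))
    {ε : ℝ} (hε : 0 < ε) (φ φd : ℝ → Fin 2 → ℂ)
    (hφ : ∀ t ∈ I, HasDerivWithinAt φ (φd t) I t)
    (hφd : ContinuousOn φd I)
    (happ : ∀ t ∈ I, ‖φd t - (!![l t, m t; 0, l t]).mulVec (φ t)‖ ≤ ε) :
    ∃ x : ℝ → Fin 2 → ℂ,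
      (∀ t ∈ I, HasDerivWithinAt x ((!![l t, m t; 0, l t]).mulVec (x t)) I t) ∧
      ∀ t ∈ I, ‖φ t - x t‖ ≤ sSup (kappa22 a l m '' I) * ε := by
  have hIO : OrdConnected I := I_ordConn hI1 hI2
  have hconv : Convex ℝ I := convex_iff_ordConnected.2 hIO
  obtain ⟨t₀, ht₀a, ht₀b⟩ := EReal.exists_between_coe_real hab
  have ht₀ : t₀ ∈ I := hI1 t₀ ht₀a ht₀b
  have hii : ∀ (f : ℝ → ℂ), ContinuousOn f I → ∀ u ∈ I, ∀ v ∈ I,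
      IntervalIntegrable f volume u v :=
    fun f hf u hu v hv => ((hf.mono (hIO.uIcc_subset hu hv))).intervalIntegrable
  have hmv : ∀ (t : ℝ) (v : Fin 2 → ℂ),
      (!![l t, m t; 0, l t]).mulVec v = ![l t * v 0 + m t * v 1, l t * v 1] := by
    intro t v
    funext i
    fin_cases i <;>
      simp [Matrix.mulVec, dotProduct, Fin.sum_univ_two]
  set p0 : ℝ → ℂ := fun t => φd t 0 - (l t * φ t 0 + m t * φ t 1) with hp0def
  set p1 : ℝ → ℂ := fun t => φd t 1 - l t * φ t 1 with hp1def
  have happ' : ∀ t ∈ I, ∀ i, ‖(φd t - (!![l t, m t; 0, l t]).mulVec (φ t)) i‖ ≤ ε :=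
    fun t ht i => le_trans (norm_le_pi_norm _ i) (happ t ht)
  have hp0 : ∀ t ∈ I, ‖p0 t‖ ≤ ε := by
    intro t ht
    have h := happ' t ht 0
    rw [hmv] at h
    simpa [hp0def] using h
  have hp1 : ∀ t ∈ I, ‖p1 t‖ ≤ ε := by
    intro t ht
    have h := happ' t ht 1
    rw [hmv] at h
    simpa [hp1def] using h
  have hφc : ContinuousOn φ I := fun t ht => (hφ t ht).continuousWithinAt
  have hφ0c : ContinuousOn (fun t => φ t 0) I := (continuous_apply 0).comp_continuousOn hφc
  have hφ1c : ContinuousOn (fun t => φ t 1) I := (continuous_apply 1).comp_continuousOn hφc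
  have hp0c : ContinuousOn p0 I :=
    ((continuous_apply 0).comp_continuousOn hφd).sub ((hl.mul hφ0c).add (hm.mul hφ1c))
  have hp1c : ContinuousOn p1 I :=
    ((continuous_apply 1).comp_continuousOn hφd).sub (hl.mul hφ1c)
  set L : ℝ → ℂ := fun t => ∫ τ in t₀..t, l τ with hLdef
  set M : ℝ → ℂ := fun t => ∫ τ in t₀..t, m τ with hMdef
  have hLsub : ∀ u ∈ I, ∀ v ∈ I, L v - L u = ∫ τ in u..v, l τ :=
    fun u hu v hv => intervalIntegral.integral_interval_sub_left
      (hii l hl t₀ ht₀ v hv) (hii l hl t₀ ht₀ u hu)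
  have hMsub : ∀ u ∈ I, ∀ v ∈ I, M v - M u = ∫ τ in u..v, m τ :=
    fun u hu v hv => intervalIntegral.integral_interval_sub_left
      (hii m hm t₀ ht₀ v hv) (hii m hm t₀ ht₀ u hu)
  have hLd : ∀ t ∈ I, HasDerivWithinAt L (l t) I t := fun t ht => ftc_helper hconv hl hLsub ht
  have hMd : ∀ t ∈ I, HasDerivWithinAt M (m t) I t := fun t ht => ftc_helper hconv hm hMsub ht
  have hLc : ContinuousOn L I := fun t ht => (hLd t ht).continuousWithinAt
  have hMc : ContinuousOn M I := fun t ht => (hMd t ht).continuousWithinAt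
  have hRe : ∀ s ∈ I, ∀ t ∈ I, ∫ τ in s..t, (l τ).re = (L t).re - (L s).re := by
    intro s hs t ht
    rw [← re_intervalIntegral (hii l hl s hs t ht), ← hLsub s hs t ht]
    rw [Complex.sub_re]
  have hSmeas : ∀ t : ℝ, MeasurableSet {s : ℝ | a < (s : EReal) ∧ s < t} := by
    intro t
    have : {s : ℝ | a < (s : EReal) ∧ s < t}
        = ((fun s : ℝ => (s : EReal)) ⁻¹' (Ioi a)) ∩ Iio t := rfl
    rw [this]
    exact (continuous_coe_real_ereal.measurable measurableSet_Ioi).inter measurableSet_Iio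
  have hSsub : ∀ t ∈ I, {s : ℝ | a < (s : EReal) ∧ s < t} ⊆ I := by
    intro t ht s hs
    exact hI1 s hs.1 (lt_of_lt_of_le (EReal.coe_lt_coe_iff.2 hs.2) (hI2 t ht).2)
  have hkerrw : ∀ s ∈ I, ∀ t ∈ I,
      (1 + ‖∫ τ in s..t, m τ‖) * Real.exp (∫ τ in s..t, (l τ).re)
      = (1 + ‖M t - M s‖) * (Real.exp ((L t).re) * Real.exp (-(L s).re)) := by
    intro s hs t ht
    rw [hRe s hs t ht, ← hMsub s hs t ht,
      show (L t).re - (L s).re = (L t).re + -(L s).re from by ring, Real.exp_add]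
  set g0 : ℝ → ℂ := fun s => Complex.exp (-L s) * (p0 s - M s * p1 s) with hg0def
  set g1 : ℝ → ℂ := fun s => Complex.exp (-L s) * p1 s with hg1def
  have hg0c : ContinuousOn g0 I :=
    (Complex.continuous_exp.comp_continuousOn (hLc.neg)).mul (hp0c.sub (hMc.mul hp1c))
  have hg1c : ContinuousOn g1 I :=
    (Complex.continuous_exp.comp_continuousOn (hLc.neg)).mul hp1c
  have hnormexp : ∀ z : ℂ, ‖Complex.exp z‖ = Real.exp z.re := by
    intro z; rw [Complex.norm_exp]
  have hg1i : ∀ t ∈ I, IntegrableOn g1 {s : ℝ | a < (s : EReal) ∧ s < t} := by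
    intro t ht
    refine Integrable.mono' ((hker t ht).const_mul (ε * Real.exp (-(L t).re)))
      ((hg1c.mono (hSsub t ht)).aestronglyMeasurable (hSmeas t)) ?_
    rw [ae_restrict_iff' (hSmeas t)]
    refine Filter.Eventually.of_forall (fun s hs => ?_)
    have hsI : s ∈ I := hSsub t ht hs
    have h1 : ‖g1 s‖ = Real.exp (-(L s).re) * ‖p1 s‖ := by
      rw [hg1def]
      simp only
      rw [norm_mul, hnormexp, Complex.neg_re]
    have h2 : Real.exp (-(L t).re) * Real.exp ((L t).re) = 1 := by
      rw [← Real.exp_add]; simp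
    have key : ε * Real.exp (-(L t).re)
        * ((1 + ‖M t - M s‖) * (Real.exp ((L t).re) * Real.exp (-(L s).re)))
        = ε * (1 + ‖M t - M s‖) * Real.exp (-(L s).re) := by
      linear_combination (ε * (1 + ‖M t - M s‖) * Real.exp (-(L s).re)) * h2
    rw [h1, hkerrw s hsI t ht, key]
    have h3 := hp1 s hsI
    nlinarith [Real.exp_pos (-(L s).re), norm_nonneg (M t - M s), norm_nonneg (p1 s),
      mul_le_mul_of_nonneg_left h3 (Real.exp_pos (-(L s).re)).le,
      mul_nonneg (mul_nonneg hε.le (norm_nonneg (M t - M s))) (Real.exp_pos (-(L s).re)).le]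
  have hg0i : ∀ t ∈ I, IntegrableOn g0 {s : ℝ | a < (s : EReal) ∧ s < t} := by
    intro t ht
    refine Integrable.mono'
      ((hker t ht).const_mul (ε * (1 + ‖M t‖) * Real.exp (-(L t).re)))
      ((hg0c.mono (hSsub t ht)).aestronglyMeasurable (hSmeas t)) ?_
    rw [ae_restrict_iff' (hSmeas t)]
    refine Filter.Eventually.of_forall (fun s hs => ?_)
    have hsI : s ∈ I := hSsub t ht hs
    have h1 : ‖g0 s‖ = Real.exp (-(L s).re) * ‖p0 s - M s * p1 s‖ := by
      rw [hg0def]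
      simp only
      rw [norm_mul, hnormexp, Complex.neg_re]
    have h2 : Real.exp (-(L t).re) * Real.exp ((L t).re) = 1 := by
      rw [← Real.exp_add]; simp
    have h4 : ‖p0 s - M s * p1 s‖ ≤ ε + ‖M s‖ * ε := by
      refine le_trans (norm_sub_le _ _) ?_
      rw [norm_mul]
      exact add_le_add (hp0 s hsI) (mul_le_mul_of_nonneg_left (hp1 s hsI) (norm_nonneg _))
    have h5 : ‖M s‖ ≤ ‖M t‖ + ‖M t - M s‖ := by
      calc ‖M s‖ = ‖M t - (M t - M s)‖ := by ring_nf
        _ ≤ ‖M t‖ + ‖M t - M s‖ := norm_sub_le _ _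
    have key : ε * (1 + ‖M t‖) * Real.exp (-(L t).re)
        * ((1 + ‖M t - M s‖) * (Real.exp ((L t).re) * Real.exp (-(L s).re)))
        = ε * (1 + ‖M t‖) * (1 + ‖M t - M s‖) * Real.exp (-(L s).re) := by
      linear_combination (ε * (1 + ‖M t‖) * (1 + ‖M t - M s‖) * Real.exp (-(L s).re)) * h2
    rw [h1, hkerrw s hsI t ht, key]
    have h6 : Real.exp (-(L s).re) * ‖p0 s - M s * p1 s‖
        ≤ Real.exp (-(L s).re) * (ε + ‖M s‖ * ε) :=
      mul_le_mul_of_nonneg_left h4 (Real.exp_pos _).le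
    have h7 : ‖M s‖ * ε ≤ (‖M t‖ + ‖M t - M s‖) * ε :=
      mul_le_mul_of_nonneg_right h5 hε.le
    nlinarith [Real.exp_pos (-(L s).re), norm_nonneg (M t - M s), norm_nonneg (M t),
      mul_nonneg (mul_nonneg hε.le (norm_nonneg (M t))) (norm_nonneg (M t - M s)),
      mul_le_mul_of_nonneg_left h7 (Real.exp_pos (-(L s).re)).le]
  have haddgen : ∀ (g : ℝ → ℂ), (∀ t ∈ I, IntegrableOn g {s : ℝ | a < (s : EReal) ∧ s < t}) →
      ContinuousOn g I → ∀ u ∈ I, ∀ v ∈ I,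
      (∫ s in {s : ℝ | a < (s : EReal) ∧ s < v}, g s)
        - (∫ s in {s : ℝ | a < (s : EReal) ∧ s < u}, g s) = ∫ s in u..v, g s := by
    intro g hgi hgc u hu v hv
    rcases le_total u v with h | h
    · rw [split_lemma a (hI2 u hu).1 h (hgi v hv)
        ((hgc.mono (hIO.uIcc_subset hu hv)).intervalIntegrable).1]
      ring
    · rw [intervalIntegral.integral_symm, split_lemma a (hI2 v hv).1 h (hgi u hu)
        ((hgc.mono (hIO.uIcc_subset hv hu)).intervalIntegrable).1]
      ring
  set w0 : ℝ → ℂ := fun t => ∫ s in {s : ℝ | a < (s : EReal) ∧ s < t}, g0 s with hw0def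
  set w1 : ℝ → ℂ := fun t => ∫ s in {s : ℝ | a < (s : EReal) ∧ s < t}, g1 s with hw1def
  have hw0sub : ∀ u ∈ I, ∀ v ∈ I, w0 v - w0 u = ∫ s in u..v, g0 s := haddgen g0 hg0i hg0c
  have hw1sub : ∀ u ∈ I, ∀ v ∈ I, w1 v - w1 u = ∫ s in u..v, g1 s := haddgen g1 hg1i hg1c
  have hw0d : ∀ t ∈ I, HasDerivWithinAt w0 (g0 t) I t :=
    fun t ht => ftc_helper hconv hg0c hw0sub ht
  have hw1d : ∀ t ∈ I, HasDerivWithinAt w1 (g1 t) I t :=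
    fun t ht => ftc_helper hconv hg1c hw1sub ht
  set e0 : ℝ → ℂ := fun t => Complex.exp (L t) * (w0 t + M t * w1 t) with he0def
  set e1 : ℝ → ℂ := fun t => Complex.exp (L t) * w1 t with he1def
  have hee : ∀ t : ℝ, Complex.exp (L t) * Complex.exp (-L t) = 1 := by
    intro t; rw [← Complex.exp_add]; simp
  have he1d : ∀ t ∈ I, HasDerivWithinAt e1 (l t * e1 t + p1 t) I t := by
    intro t ht
    have h := ((hLd t ht).cexp).mul (hw1d t ht)
    have heq : l t * e1 t + p1 t = Complex.exp (L t) * l t * w1 t + Complex.exp (L t) * g1 t := by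
      simp only [he1def, hg1def]
      linear_combination (-(p1 t)) * hee t
    rw [heq]
    exact h
  have he0d : ∀ t ∈ I, HasDerivWithinAt e0 (l t * e0 t + m t * e1 t + p0 t) I t := by
    intro t ht
    have h := ((hLd t ht).cexp).mul ((hw0d t ht).add ((hMd t ht).mul (hw1d t ht)))
    have heq : l t * e0 t + m t * e1 t + p0 t
        = Complex.exp (L t) * l t * (w0 t + M t * w1 t)
          + Complex.exp (L t) * (g0 t + (m t * w1 t + M t * g1 t)) := by
      simp only [he0def, he1def, hg0def, hg1def]
      linear_combination (-(p0 t)) * hee t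
    rw [heq]
    exact h
  refine ⟨fun t => ![φ t 0 - e0 t, φ t 1 - e1 t], ?_, ?_⟩
  · intro t ht
    rw [hmv]
    apply hasDerivWithinAt_pi.2
    intro i
    fin_cases i
    · simp only [Matrix.cons_val_zero, Matrix.cons_val_one, Matrix.head_cons]
      have hφ0d : HasDerivWithinAt (fun t => φ t 0) (φd t 0) I t :=
        hasDerivWithinAt_pi.1 (hφ t ht) 0
      have h := hφ0d.sub (he0d t ht)
      have heq : l t * (φ t 0 - e0 t) + m t * (φ t 1 - e1 t)
          = φd t 0 - (l t * e0 t + m t * e1 t + p0 t) := by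
        simp only [hp0def]; ring
      rw [heq]
      exact h
    · simp only [Matrix.cons_val_zero, Matrix.cons_val_one, Matrix.head_cons]
      have hφ1d : HasDerivWithinAt (fun t => φ t 1) (φd t 1) I t :=
        hasDerivWithinAt_pi.1 (hφ t ht) 1
      have h := hφ1d.sub (he1d t ht)
      have heq : l t * (φ t 1 - e1 t) = φd t 1 - (l t * e1 t + p1 t) := by
        simp only [hp1def]; ring
      rw [heq]
      exact h
  · intro t ht
    have hK : kappa22 a l m t ≤ sSup (kappa22 a l m '' I) := le_csSup hbdd ⟨t, ht, rfl⟩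
    have hκ0 : 0 ≤ kappa22 a l m t := by
      apply setIntegral_nonneg (hSmeas t)
      intro s _
      positivity
    have hsub : φ t - (fun t => ![φ t 0 - e0 t, φ t 1 - e1 t]) t = ![e0 t, e1 t] := by
      funext i; fin_cases i <;> simp
    rw [hsub]
    have hKε : 0 ≤ sSup (kappa22 a l m '' I) * ε := mul_nonneg (le_trans hκ0 hK) hε.le
    -- component bounds
    have he1b : ‖e1 t‖ ≤ kappa22 a l m t * ε := by
      have he1eq : e1 t = ∫ s in {s : ℝ | a < (s : EReal) ∧ s < t},
          Complex.exp (L t) * g1 s := by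
        rw [he1def]
        simp only
        rw [MeasureTheory.integral_const_mul]
      rw [he1eq]
      have hpt : ∀ s ∈ {s : ℝ | a < (s : EReal) ∧ s < t}, ‖Complex.exp (L t) * g1 s‖
          ≤ ε * ((1 + ‖∫ τ in s..t, m τ‖) * Real.exp (∫ τ in s..t, (l τ).re)) := by
        intro s hs
        have hsI : s ∈ I := hSsub t ht hs
        have hid : Complex.exp (L t) * g1 s = Complex.exp (L t - L s) * p1 s := by
          simp only [hg1def]
          rw [sub_eq_add_neg, Complex.exp_add]
          ring
        rw [hid, norm_mul, hnormexp, Complex.sub_re, ← hRe s hsI t ht]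
        have h3 := hp1 s hsI
        nlinarith [Real.exp_pos (∫ τ in s..t, (l τ).re), norm_nonneg (p1 s),
          norm_nonneg (∫ τ in s..t, m τ),
          mul_nonneg (mul_nonneg hε.le (norm_nonneg (∫ τ in s..t, m τ)))
            (Real.exp_pos (∫ τ in s..t, (l τ).re)).le]
      have hle := MeasureTheory.norm_integral_le_of_norm_le ((hker t ht).const_mul ε)
        ((ae_restrict_iff' (hSmeas t)).2 (Filter.Eventually.of_forall hpt))
      refine le_trans hle ?_
      rw [MeasureTheory.integral_const_mul, mul_comm]
      exact le_of_eq rfl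
    have he0b : ‖e0 t‖ ≤ kappa22 a l m t * ε := by
      have he0eq : e0 t = ∫ s in {s : ℝ | a < (s : EReal) ∧ s < t},
          Complex.exp (L t) * (g0 s + M t * g1 s) := by
        rw [he0def]
        simp only
        rw [MeasureTheory.integral_const_mul,
          integral_add (hg0i t ht) ((hg1i t ht).const_mul (M t)),
          MeasureTheory.integral_const_mul]
      rw [he0eq]
      have hpt : ∀ s ∈ {s : ℝ | a < (s : EReal) ∧ s < t},
          ‖Complex.exp (L t) * (g0 s + M t * g1 s)‖
          ≤ ε * ((1 + ‖∫ τ in s..t, m τ‖) * Real.exp (∫ τ in s..t, (l τ).re)) := by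
        intro s hs
        have hsI : s ∈ I := hSsub t ht hs
        have hid : Complex.exp (L t) * (g0 s + M t * g1 s)
            = Complex.exp (L t - L s) * (p0 s + (M t - M s) * p1 s) := by
          simp only [hg0def, hg1def]
          rw [show L t - L s = L t + -L s from by ring, Complex.exp_add]
          ring
        rw [hid, norm_mul, hnormexp, Complex.sub_re, ← hRe s hsI t ht, ← hMsub s hsI t ht]
        have hb : ‖p0 s + (M t - M s) * p1 s‖ ≤ ε * (1 + ‖M t - M s‖) := by
          refine le_trans (norm_add_le _ _) ?_
          rw [norm_mul]
          have h3 := hp0 s hsI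
          have h4 := hp1 s hsI
          nlinarith [norm_nonneg (M t - M s), norm_nonneg (p1 s),
            mul_le_mul_of_nonneg_left h4 (norm_nonneg (M t - M s))]
        calc Real.exp (∫ τ in s..t, (l τ).re) * ‖p0 s + (M t - M s) * p1 s‖
            ≤ Real.exp (∫ τ in s..t, (l τ).re) * (ε * (1 + ‖M t - M s‖)) :=
              mul_le_mul_of_nonneg_left hb (Real.exp_pos _).le
          _ = ε * ((1 + ‖M t - M s‖) * Real.exp (∫ τ in s..t, (l τ).re)) := by ring
      have hle := MeasureTheory.norm_integral_le_of_norm_le ((hker t ht).const_mul ε)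
        ((ae_restrict_iff' (hSmeas t)).2 (Filter.Eventually.of_forall hpt))
      refine le_trans hle ?_
      rw [MeasureTheory.integral_const_mul, mul_comm]
      exact le_of_eq rfl
    rw [pi_norm_le_iff_of_nonneg hKε]
    intro i
    have hKK : kappa22 a l m t * ε ≤ sSup (kappa22 a l m '' I) * ε :=
      mul_le_mul_of_nonneg_right hK hε.le
    fin_cases i
    · simpa using le_trans he0b hKK
    · simpa using le_trans he1b hKK

lemma mulVec_eq (c d : ℂ) (v : Fin 2 → ℂ) :
    (!![c, d; 0, c]).mulVec v = ![c * v 0 + d * v 1, c * v 1] := by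
  funext i
  fin_cases i <;> simp [Matrix.mulVec, dotProduct, Fin.sum_univ_two]

lemma uniq_sol (a b : EReal) (hab : a < b) (I : Set ℝ)
    (hI1 : ∀ x : ℝ, a < (x : EReal) → (x : EReal) < b → x ∈ I)
    (hI2 : ∀ x ∈ I, a ≤ (x : EReal) ∧ (x : EReal) ≤ b)
    (l m : ℝ → ℂ) (hl : ContinuousOn l I)
    (hlim : ∀ t₀ : ℝ, a < (t₀ : EReal) → (t₀ : EReal) < b →
        Tendsto (fun t => ∫ s in t..t₀, (l s).re)
          (Filter.comap (fun x : ℝ => (x : EReal)) (nhdsWithin a (Ioi a))) atBot)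
    (x y : ℝ → Fin 2 → ℂ)
    (hx : ∀ t ∈ I, HasDerivWithinAt x ((!![l t, m t; 0, l t]).mulVec (x t)) I t)
    (hy : ∀ t ∈ I, HasDerivWithinAt y ((!![l t, m t; 0, l t]).mulVec (y t)) I t)
    (C : ℝ) (hC : ∀ t ∈ I, ‖y t - x t‖ ≤ C) : EqOn y x I := by
  have hIO : OrdConnected I := I_ordConn hI1 hI2
  have hconv : Convex ℝ I := convex_iff_ordConnected.2 hIO
  obtain ⟨t₀, ht₀a, ht₀b⟩ := EReal.exists_between_coe_real hab
  have ht₀ : t₀ ∈ I := hI1 t₀ ht₀a ht₀b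
  have hii : ∀ u ∈ I, ∀ v ∈ I, IntervalIntegrable l volume u v :=
    fun u hu v hv => ((hl.mono (hIO.uIcc_subset hu hv))).intervalIntegrable
  set L : ℝ → ℂ := fun t => ∫ τ in t₀..t, l τ with hLdef
  have hLsub : ∀ u ∈ I, ∀ v ∈ I, L v - L u = ∫ τ in u..v, l τ :=
    fun u hu v hv => intervalIntegral.integral_interval_sub_left (hii t₀ ht₀ v hv) (hii t₀ ht₀ u hu)
  have hLd : ∀ t ∈ I, HasDerivWithinAt L (l t) I t := fun t ht => ftc_helper hconv hl hLsub ht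
  have hee : ∀ t : ℝ, Complex.exp (L t) * Complex.exp (-L t) = 1 := by
    intro t; rw [← Complex.exp_add]; simp
  -- filter facts
  set F : Filter ℝ := Filter.comap (fun x : ℝ => (x : EReal)) (nhdsWithin a (Ioi a)) with hFdef
  have hFne : F.NeBot := by
    rw [hFdef, Filter.comap_neBot_iff]
    intro U hU
    rw [mem_nhdsWithin] at hU
    obtain ⟨V, hVopen, haV, hVU⟩ := hU
    obtain ⟨u, hau, hIco⟩ := exists_Ico_subset_of_mem_nhds (hVopen.mem_nhds haV) ⟨b, hab⟩
    obtain ⟨r, har, hru⟩ := EReal.exists_between_coe_real hau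
    exact ⟨r, hVU ⟨hIco ⟨har.le, hru⟩, har⟩⟩
  have hevI : ∀ᶠ r in F, r ∈ I := by
    have h1 : {z : EReal | z ∈ Ioi a} ∈ nhdsWithin a (Ioi a) := self_mem_nhdsWithin
    have h2 : Iio b ∈ nhdsWithin a (Ioi a) := nhdsWithin_le_nhds (Iio_mem_nhds hab)
    rw [hFdef]
    filter_upwards [Filter.preimage_mem_comap h1, Filter.preimage_mem_comap h2] with r hr1 hr2
    exact hI1 r hr1 hr2
  have htend : Tendsto (fun r => Real.exp ((L r).re)) F atTop := by
    have h0 := hlim t₀ ht₀a ht₀b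
    have h1 : Tendsto (fun r => -∫ s in r..t₀, (l s).re) F atTop :=
      tendsto_neg_atBot_atTop.comp h0
    have h2 : Tendsto (fun r => (L r).re) F atTop := by
      refine h1.congr' ?_
      filter_upwards [hevI] with r hrI
      rw [← intervalIntegral.integral_symm, ← re_intervalIntegral (hii t₀ ht₀ r hrI)]
    exact Real.tendsto_exp_atTop.comp h2
  -- key sub-argument, applied twice
  have main : ∀ d : ℝ → ℂ, (∀ t ∈ I, HasDerivWithinAt d (l t * d t) I t) →
      (∀ t ∈ I, ‖d t‖ ≤ C) → ∀ t ∈ I, d t = 0 := by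
    intro d hd hdC
    set u : ℝ → ℂ := fun t => Complex.exp (-L t) * d t with hudef
    have hud : ∀ t ∈ I, HasDerivWithinAt u 0 I t := by
      intro t ht
      have h := (((hLd t ht).neg).cexp).mul (hd t ht)
      have heq : Complex.exp (-L t) * -l t * d t + Complex.exp (-L t) * (l t * d t) = 0 := by
        ring
      rw [← heq]
      exact h
    have hconst : ∀ t ∈ I, u t = u t₀ := by
      intro t ht
      have h := hconv.norm_image_sub_le_of_norm_hasDerivWithin_le (C := 0) hud
        (fun s hs => by simp) ht₀ ht
      simp only [zero_mul] at h
      have := le_antisymm h (norm_nonneg _)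
      rwa [norm_eq_zero, sub_eq_zero] at this
    set c : ℂ := u t₀ with hcdef
    have hdrep : ∀ t ∈ I, d t = Complex.exp (L t) * c := by
      intro t ht
      have h := hconst t ht
      simp only [hudef] at h
      have h2 : Complex.exp (L t) * (Complex.exp (-L t) * d t) = d t := by
        rw [← mul_assoc, hee t, one_mul]
      rw [← h2, h]
    have hc0 : c = 0 := by
      by_contra hc
      have hcpos : 0 < ‖c‖ := norm_pos_iff.2 hc
      have hev := htend.eventually_gt_atTop (C / ‖c‖)
      obtain ⟨r, hrI, hrgt⟩ := (hevI.and hev).exists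
      have hb1 : ‖d r‖ ≤ C := hdC r hrI
      rw [hdrep r hrI, norm_mul, Complex.norm_exp] at hb1
      rw [div_lt_iff₀ hcpos] at hrgt
      linarith
    intro t ht
    rw [hdrep t ht, hc0, mul_zero]
  -- apply to the second component
  have hx1 : ∀ t ∈ I, HasDerivWithinAt (fun s => y s 1 - x s 1)
      (l t * (y t 1 - x t 1)) I t := by
    intro t ht
    have h := (hasDerivWithinAt_pi.1 (hy t ht) 1).sub (hasDerivWithinAt_pi.1 (hx t ht) 1)
    rw [mulVec_eq, mulVec_eq] at h
    simp only [Matrix.cons_val_one, Matrix.head_cons] at h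
    have heq : l t * (y t 1 - x t 1) = l t * y t 1 - l t * x t 1 := by ring
    rw [heq]
    exact h
  have hC1 : ∀ t ∈ I, ‖y t 1 - x t 1‖ ≤ C := by
    intro t ht
    have := norm_le_pi_norm (y t - x t) 1
    simp only [Pi.sub_apply] at this
    exact this.trans (hC t ht)
  have hd1 : ∀ t ∈ I, y t 1 - x t 1 = 0 := main _ hx1 hC1
  have hx0 : ∀ t ∈ I, HasDerivWithinAt (fun s => y s 0 - x s 0)
      (l t * (y t 0 - x t 0)) I t := by
    intro t ht
    have h := (hasDerivWithinAt_pi.1 (hy t ht) 0).sub (hasDerivWithinAt_pi.1 (hx t ht) 0)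
    rw [mulVec_eq, mulVec_eq] at h
    simp only [Matrix.cons_val_zero] at h
    have heq : l t * (y t 0 - x t 0)
        = l t * y t 0 + m t * y t 1 - (l t * x t 0 + m t * x t 1) := by
      have h1 : y t 1 = x t 1 := by
        have := hd1 t ht; linear_combination this
      rw [h1]; ring
    rw [heq]
    exact h
  have hC0 : ∀ t ∈ I, ‖y t 0 - x t 0‖ ≤ C := by
    intro t ht
    have := norm_le_pi_norm (y t - x t) 0
    simp only [Pi.sub_apply] at this
    exact this.trans (hC t ht)
  have hd0 : ∀ t ∈ I, y t 0 - x t 0 = 0 := main _ hx0 hC0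
  intro t ht
  funext i
  fin_cases i
  · have := hd0 t ht; simpa [sub_eq_zero] using this
  · have := hd1 t ht; simpa [sub_eq_zero] using this

lemma K_pos (a b : EReal) (hab : a < b) (I : Set ℝ)
    (hI1 : ∀ x : ℝ, a < (x : EReal) → (x : EReal) < b → x ∈ I)
    (hI2 : ∀ x ∈ I, a ≤ (x : EReal) ∧ (x : EReal) ≤ b)
    (l m : ℝ → ℂ)
    (hker : ∀ t ∈ I, IntegrableOn
      (fun s => (1 + ‖∫ τ in s..t, m τ‖) * Real.exp (∫ τ in s..t, (l τ).re))
      {s : ℝ | a < (s : EReal) ∧ s < t})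
    (hbdd : BddAbove (kappa22 a l m '' I)) : 0 < sSup (kappa22 a l m '' I) := by
  obtain ⟨t₀, ht₀a, ht₀b⟩ := EReal.exists_between_coe_real hab
  have ht₀ : t₀ ∈ I := hI1 t₀ ht₀a ht₀b
  obtain ⟨t₁, ht₁a, ht₁t₀⟩ := EReal.exists_between_coe_real ht₀a
  have ht₁t₀' : t₁ < t₀ := EReal.coe_lt_coe_iff.1 ht₁t₀
  have hSmeas : MeasurableSet {s : ℝ | a < (s : EReal) ∧ s < t₀} := by
    have : {s : ℝ | a < (s : EReal) ∧ s < t₀}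
        = ((fun s : ℝ => (s : EReal)) ⁻¹' (Ioi a)) ∩ Iio t₀ := rfl
    rw [this]
    exact (continuous_coe_real_ereal.measurable measurableSet_Ioi).inter measurableSet_Iio
  have hpos : 0 < kappa22 a l m t₀ := by
    rw [kappa22]
    rw [setIntegral_pos_iff_support_of_nonneg_ae]
    · refine lt_of_lt_of_le ?_ (measure_mono (?_ :
        Ioo t₁ t₀ ⊆ Function.support (fun s => (1 + ‖∫ τ in s..t₀, m τ‖)
          * Real.exp (∫ τ in s..t₀, (l τ).re)) ∩ {s : ℝ | a < (s : EReal) ∧ s < t₀}))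
      · rw [Real.volume_Ioo]
        exact ENNReal.ofReal_pos.2 (by linarith)
      · intro s hs
        constructor
        · apply Function.mem_support.2
          positivity
        · exact ⟨lt_trans ht₁a (EReal.coe_lt_coe_iff.2 hs.1), hs.2⟩
    · refine Filter.Eventually.of_forall (fun s => ?_)
      simp only [Pi.zero_apply]
      positivity
    · exact hker t₀ ht₀
  exact lt_of_lt_of_le hpos (le_csSup hbdd ⟨t₀, ht₀, rfl⟩)

theorem statement11 (a b : EReal) (hab : a < b) (I : Set ℝ)
    (hI1 : ∀ x : ℝ, a < (x : EReal) → (x : EReal) < b → x ∈ I)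
    (hI2 : ∀ x ∈ I, a ≤ (x : EReal) ∧ (x : EReal) ≤ b)
    (l m : ℝ → ℂ) (hl : ContinuousOn l I) (hm : ContinuousOn m I)
    (hker : ∀ t ∈ I, IntegrableOn
      (fun s => (1 + ‖∫ τ in s..t, m τ‖) * Real.exp (∫ τ in s..t, (l τ).re))
      {s : ℝ | a < (s : EReal) ∧ s < t})
    (hbdd : BddAbove (kappa22 a l m '' I)) :
    UlamStable2C I (fun t => !![l t, m t; 0, l t]) (sSup (kappa22 a l m '' I)) ∧
    ((∀ t₀ : ℝ, a < (t₀ : EReal) → (t₀ : EReal) < b →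
        Tendsto (fun t => ∫ s in t..t₀, (l s).re)
          (Filter.comap (fun x : ℝ => (x : EReal)) (nhdsWithin a (Ioi a))) atBot) →
      ∀ ε : ℝ, 0 < ε → ∀ φ φd : ℝ → Fin 2 → ℂ,
        (∀ t ∈ I, HasDerivWithinAt φ (φd t) I t) →
        ContinuousOn φd I →
        (∀ t ∈ I, ‖φd t - (!![l t, m t; 0, l t]).mulVec (φ t)‖ ≤ ε) →
        ∃ x : ℝ → Fin 2 → ℂ,
          ((∀ t ∈ I, HasDerivWithinAt x ((!![l t, m t; 0, l t]).mulVec (x t)) I t) ∧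
            ∀ t ∈ I, ‖φ t - x t‖ ≤ sSup (kappa22 a l m '' I) * ε) ∧
          ∀ y : ℝ → Fin 2 → ℂ,
            ((∀ t ∈ I, HasDerivWithinAt y ((!![l t, m t; 0, l t]).mulVec (y t)) I t) ∧
              ∀ t ∈ I, ‖φ t - y t‖ ≤ sSup (kappa22 a l m '' I) * ε) →
            EqOn y x I) := by
  constructor
  · exact ⟨K_pos a b hab I hI1 hI2 l m hker hbdd,
      fun ε hε φ φd hφ hφd happ =>
        exists_sol a b hab I hI1 hI2 l m hl hm hker hbdd hε φ φd hφ hφd happ⟩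
  · intro hlim ε hε φ φd hφ hφd happ
    obtain ⟨x, hx, hb⟩ := exists_sol a b hab I hI1 hI2 l m hl hm hker hbdd hε φ φd hφ hφd happ
    refine ⟨x, ⟨hx, hb⟩, ?_⟩
    rintro y ⟨hy, hyb⟩
    refine uniq_sol a b hab I hI1 hI2 l m hl hlim x y hx hy
      (2 * (sSup (kappa22 a l m '' I) * ε)) ?_
    intro t ht
    have heq : y t - x t = (φ t - x t) - (φ t - y t) := by abel
    rw [heq]
    calc ‖(φ t - x t) - (φ t - y t)‖ ≤ ‖φ t - x t‖ + ‖φ t - y t‖ := norm_sub_le _ _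
      _ ≤ 2 * (sSup (kappa22 a l m '' I) * ε) := by
          have h1 := hb t ht; have h2 := hyb t ht; linarith
end
end
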